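/- arXiv:1305.4704 — 3 statements merged into one kernel-verified Lean document; each statement's English description precedes it below -/
import Mathlib

section
/- Let {(x^t, y^t, z^t)} be generated by the proximal AMA applied to min f(x)+g(y) s.t. Ax+By=c, and suppose assumption A1 holds. Suppose the parameters β>0, T ⪰ 0 and γ>0 satisfy: (i) Σ_g + T + βB*B ≻ 0; (ii) for some μ>0, 2Σ_f − (β+μ)A*A ≻ 0 and γ < 1 + min{β,μ}/(2β). Then the sequence {(x^t, y^t, z^t)} converges to a limit (x⋄, y⋄, z⋄) satisfying A*z⋄ ∈ ∂f(x⋄), B*z⋄ ∈ ∂g(y⋄) and Ax⋄ + By⋄ = c; in particular (x^t, y^t) converges to an optimal solution of the primal problem and z^t converges to an optimal solution of its dual. -/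
open RealInnerProductSpace Filter Topology

/-- `v` is a subgradient of the extended-real-valued function `f` at `x`. -/
def IsSubgradAt {E : Type*} [NormedAddCommGroup E] [InnerProductSpace ℝ E]
    (f : E → EReal) (v x : E) : Prop :=
  ∀ u, f x + ((⟪v, u - x⟫ : ℝ) : EReal) ≤ f u

lemma ama_discrim {a b c : ℝ} (hc : 0 ≤ c) (h : ∀ l : ℝ, 0 ≤ a + 2*l*b + l^2*c) :
    b^2 ≤ a*c := by
  rcases eq_or_lt_of_le hc with hc0 | hcpos
  · have hb : b = 0 := by
      by_contra hb
      have h1 := h (-(a+1)/(2*b))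
      rw [← hc0] at h1
      have e1 : 2*(-(a+1)/(2*b))*b = -(a+1) := by field_simp
      nlinarith
    have := h 0
    nlinarith
  · have e1 : a + 2*(-b/c)*b + (-b/c)^2*c = a - b^2/c := by field_simp; ring
    have h1 := h (-b/c)
    rw [e1] at h1
    have e2 : b^2/c * c = b^2 := by field_simp
    nlinarith

lemma ama_coercive {E : Type*} [NormedAddCommGroup E] [InnerProductSpace ℝ E]
    [FiniteDimensional ℝ E] (q : E → ℝ) (hcont : Continuous q)
    (hhom : ∀ (r : ℝ) (w : E), q (r • w) = r^2 * q w)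
    (hpos : ∀ w : E, w ≠ 0 → 0 < q w) :
    ∃ ρ : ℝ, 0 < ρ ∧ ∀ w : E, ρ * ‖w‖^2 ≤ q w := by
  by_cases htriv : ∀ w : E, w = 0
  · exact ⟨1, one_pos, fun w => by
      rw [htriv w]; simp [show q (0:E) = 0 by simpa using hhom 0 0]⟩
  push_neg at htriv
  obtain ⟨w₀, hw₀⟩ := htriv
  have hsph : (Metric.sphere (0:E) 1).Nonempty :=
    ⟨‖w₀‖⁻¹ • w₀, by simp [norm_smul, inv_mul_cancel₀ (norm_ne_zero_iff.2 hw₀)]⟩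
  obtain ⟨u, hu, hmin⟩ := (isCompact_sphere (0:E) 1).exists_isMinOn hsph hcont.continuousOn
  have hunorm : ‖u‖ = 1 := by simpa using hu
  have hune : u ≠ 0 := by intro h; simp [h] at hunorm
  refine ⟨q u, hpos u hune, fun w => ?_⟩
  by_cases hw : w = 0
  · simp [hw, show q (0:E) = 0 by simpa using hhom 0 0]
  · have hn : ‖w‖ ≠ 0 := norm_ne_zero_iff.2 hw
    have hmem : ‖w‖⁻¹ • w ∈ Metric.sphere (0:E) 1 := by
      simp [norm_smul, inv_mul_cancel₀ hn]
    have h1 : q u ≤ q (‖w‖⁻¹ • w) := hmin hmem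
    have h2 : q (‖w‖⁻¹ • w) = ‖w‖⁻¹^2 * q w := hhom _ _
    have hn2 : (0:ℝ) < ‖w‖^2 := by positivity
    rw [h2] at h1
    have := mul_le_mul_of_nonneg_left h1 (le_of_lt hn2)
    calc q u * ‖w‖^2 = ‖w‖^2 * (q u) := by ring
    _ ≤ ‖w‖^2 * (‖w‖⁻¹^2 * q w) := this
    _ = q w := by field_simp

lemma ama_twovar {Z : Type*} [NormedAddCommGroup Z] [InnerProductSpace ℝ Z]
    (l₁ l₂ cc : ℝ) (h1 : 0 < l₁) (h2 : 0 < l₂) (h3 : cc^2 < l₁ * l₂) :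
    ∃ η : ℝ, 0 < η ∧ ∀ a b : Z,
      η * (‖a‖^2 + ‖b‖^2) ≤ l₁ * ‖a‖^2 + l₂ * ‖b‖^2 + 2 * cc * ⟪a, b⟫ := by
  have hsum : 0 < l₁ + l₂ := by linarith
  have hnum : 0 < l₁*l₂ - cc^2 := by linarith
  set η := min (l₁/2) (min (l₂/2) ((l₁*l₂ - cc^2)/(l₁+l₂))) with hη
  have hηpos : 0 < η :=
    lt_min (by linarith) (lt_min (by linarith) (div_pos hnum hsum))
  refine ⟨η, hηpos, fun a b => ?_⟩
  have hη1 : η ≤ l₁/2 := min_le_left _ _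
  have hη2 : η ≤ l₂/2 := le_trans (min_le_right _ _) (min_le_left _ _)
  have hη3 : η ≤ (l₁*l₂ - cc^2)/(l₁+l₂) := le_trans (min_le_right _ _) (min_le_right _ _)
  have h4 : η * (l₁+l₂) ≤ l₁*l₂ - cc^2 := by
    calc η*(l₁+l₂) ≤ ((l₁*l₂-cc^2)/(l₁+l₂))*(l₁+l₂) :=
          mul_le_mul_of_nonneg_right hη3 hsum.le
    _ = l₁*l₂-cc^2 := by field_simp
  have hkey : cc^2 ≤ (l₁ - η) * (l₂ - η) := by nlinarith [sq_nonneg η]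
  have habs : -(2*(abs cc)*(‖a‖*‖b‖)) ≤ 2*cc*⟪a,b⟫ := by
    have h5 : abs (2*cc*⟪a,b⟫) ≤ 2*(abs cc)*(‖a‖*‖b‖) := by
      rw [abs_mul, abs_mul, abs_two]
      nlinarith [abs_real_inner_le_norm a b, abs_nonneg cc, abs_nonneg (⟪a,b⟫:ℝ)]
    linarith [neg_abs_le (2*cc*⟪a,b⟫)]
  have hp : 0 < l₁ - η := by linarith
  have hq : 0 ≤ l₂ - η := by linarith
  have hAB : 2 * (abs cc) * (‖a‖ * ‖b‖) ≤ (l₁ - η) * ‖a‖^2 + (l₂ - η) * ‖b‖^2 := by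
    nlinarith [sq_nonneg ((l₁ - η) * ‖a‖ - (abs cc) * ‖b‖), sq_abs cc, norm_nonneg a, norm_nonneg b,
      mul_nonneg (norm_nonneg a) (norm_nonneg b)]
  nlinarith


lemma ama_add_coe_ne_top {a : EReal} (ha : a ≠ ⊤) (r : ℝ) : a + (r : EReal) ≠ ⊤ := by
  by_cases hb : a = ⊥
  · simp [hb]
  · rw [← EReal.coe_toReal ha hb, ← EReal.coe_add]; exact EReal.coe_ne_top _

lemma ama_ne_top {a b : EReal} {r : ℝ} (h : a + (r : EReal) ≤ b) (hb : b ≠ ⊤) : a ≠ ⊤ := by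
  intro h'
  rw [h'] at h
  rw [EReal.top_add_coe] at h
  exact hb (top_le_iff.1 h)

lemma ama_le_of_forall_pos {a b Q : ℝ} (hQ : 0 ≤ Q)
    (h : ∀ l : ℝ, 0 < l → l ≤ 1 → a ≤ b + l * Q) : a ≤ b := by
  refine le_of_forall_pos_le_add fun ε hε => ?_
  have hl : 0 < min 1 (ε/(Q+1)) := lt_min one_pos (by positivity)
  have := h _ hl (min_le_left _ _)
  have h2 : min 1 (ε/(Q+1)) * Q ≤ ε := by
    have h3 : min 1 (ε/(Q+1)) ≤ ε/(Q+1) := min_le_right _ _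
    calc min 1 (ε/(Q+1)) * Q ≤ (ε/(Q+1)) * Q := mul_le_mul_of_nonneg_right h3 hQ
    _ ≤ ε := by rw [div_mul_eq_mul_div, div_le_iff₀ (by linarith)]; nlinarith
  linarith

/-- Subgradient from global minimality of `f + linear`. -/
lemma ama_subgrad_linear {X : Type*} [NormedAddCommGroup X] [InnerProductSpace ℝ X]
    (f : X → EReal) (hne : ∀ x, f x ≠ ⊥) (hproper : ∃ x, f x ≠ ⊤) (v x₁ : X)
    (h : ∀ x', f x₁ + ((-⟪v, x₁⟫ : ℝ) : EReal) ≤ f x' + ((-⟪v, x'⟫ : ℝ) : EReal)) :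
    IsSubgradAt f v x₁ := by
  obtain ⟨x₀, hx₀⟩ := hproper
  have hne_top : f x₁ ≠ ⊤ := ama_ne_top (h x₀) (ama_add_coe_ne_top hx₀ _)
  intro x'
  by_cases hx' : f x' = ⊤
  · rw [hx']; exact le_top
  · have hp := EReal.coe_toReal hne_top (hne x₁)
    have hq := EReal.coe_toReal hx' (hne x')
    set p := (f x₁).toReal
    set q := (f x').toReal
    have h1 := h x'
    rw [← hp, ← hq] at h1 ⊢
    rw [← EReal.coe_add, ← EReal.coe_add, EReal.coe_le_coe_iff] at h1
    rw [← EReal.coe_add, EReal.coe_le_coe_iff]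
    rw [inner_sub_right]
    linarith

/-- Subgradient from global minimality of `g + q`, where `q` is quadratic-like. -/
lemma ama_subgrad_prox {Y : Type*} [NormedAddCommGroup Y] [InnerProductSpace ℝ Y]
    (g : Y → EReal) (hne : ∀ y, g y ≠ ⊥) (hproper : ∃ y, g y ≠ ⊤)
    (hg_cvx : ∀ (y₁ y₂ : Y) (a b : ℝ), 0 ≤ a → 0 ≤ b → a + b = 1 →
      g (a • y₁ + b • y₂) ≤ (a : EReal) * g y₁ + (b : EReal) * g y₂)
    (q : Y → ℝ) (v yh : Y) (Q : Y → ℝ) (hQ : ∀ w, 0 ≤ Q w)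
    (hexp : ∀ (w : Y) (l : ℝ), q (yh + l • w) = q yh - l * ⟪v, w⟫ + l^2 * Q w)
    (h : ∀ y', g yh + ((q yh : ℝ) : EReal) ≤ g y' + ((q y' : ℝ) : EReal)) :
    IsSubgradAt g v yh := by
  obtain ⟨y₀, hy₀⟩ := hproper
  have hne_top : g yh ≠ ⊤ := ama_ne_top (h y₀) (ama_add_coe_ne_top hy₀ _)
  intro y'
  by_cases hy' : g y' = ⊤
  · rw [hy']; exact le_top
  · have hp := EReal.coe_toReal hne_top (hne yh)
    have hq' := EReal.coe_toReal hy' (hne y')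
    set G := (g yh).toReal
    set G' := (g y').toReal
    set w := y' - yh with hw
    rw [← hp, ← hq', ← EReal.coe_add, EReal.coe_le_coe_iff]
    have key : ⟪v, w⟫ ≤ G' - G := by
      refine ama_le_of_forall_pos (hQ w) fun l hl hl1 => ?_
      set yl := yh + l • w with hyl
      have hconv : g yl ≤ (((1-l) * G + l * G' : ℝ) : EReal) := by
        have e : yl = (1-l) • yh + l • y' := by
          rw [hyl, hw]; module
        rw [e]
        calc g ((1-l) • yh + l • y') ≤ ((1-l : ℝ) : EReal) * g yh + ((l:ℝ) : EReal) * g y' :=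
              hg_cvx yh y' (1-l) l (by linarith) hl.le (by ring)
        _ = (((1-l) * G + l * G' : ℝ) : EReal) := by
              rw [← hp, ← hq']
              norm_cast
      have hyl_ne_top : g yl ≠ ⊤ := by
        intro hc; rw [hc] at hconv; exact absurd hconv (not_le.2 (EReal.coe_lt_top _))
      have hGl := EReal.coe_toReal hyl_ne_top (hne yl)
      set Gl := (g yl).toReal
      have h1 := h yl
      rw [← hp, ← hGl, ← EReal.coe_add, ← EReal.coe_add, EReal.coe_le_coe_iff] at h1
      rw [← hGl, EReal.coe_le_coe_iff] at hconv
      have hexp1 := hexp w l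
      rw [← hyl] at hexp1
      -- G + q yh ≤ Gl + q yl, q yl = q yh - l ⟪v,w⟫ + l² Q w, Gl ≤ (1-l) G + l G'
      rw [hexp1] at h1
      have : l * ⟪v,w⟫ ≤ l * (G' - G) + l^2 * Q w := by linarith
      have h2 : ⟪v,w⟫ ≤ (G' - G) + l * Q w := by
        have h3 : l * ⟪v,w⟫ ≤ l * ((G'-G) + l * Q w) := by nlinarith
        exact le_of_mul_le_mul_left h3 hl
      linarith
    rw [inner_sub_right] at key ⊢
    linarith

/-- Limits of subgradients are subgradients (for lsc `f`). -/
lemma ama_subgrad_limit {E : Type*} [NormedAddCommGroup E] [InnerProductSpace ℝ E]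
    (f : E → EReal) (hne : ∀ x, f x ≠ ⊥) (hlsc : LowerSemicontinuous f)
    (u w : ℕ → E) (v x : E) (hu : Tendsto u atTop (𝓝 v)) (hw : Tendsto w atTop (𝓝 x))
    (hsub : ∀ k, IsSubgradAt f (u k) (w k)) : IsSubgradAt f v x := by
  intro x'
  by_cases hx' : f x' = ⊤
  · rw [hx']; exact le_top
  have hq := EReal.coe_toReal hx' (hne x')
  set q := (f x').toReal
  by_contra hcon
  push_neg at hcon
  rw [← hq] at hcon
  set cinf := (⟪v, x' - x⟫ : ℝ)
  have hlt : ((q - cinf : ℝ) : EReal) < f x := by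
    by_cases hfx : f x = ⊤
    · rw [hfx]; exact EReal.coe_lt_top _
    · have hp := EReal.coe_toReal hfx (hne x)
      rw [← hp] at hcon ⊢
      rw [← EReal.coe_add, EReal.coe_lt_coe_iff] at hcon
      rw [EReal.coe_lt_coe_iff]
      linarith
  obtain ⟨b, hb1, hb2⟩ := EReal.exists_between_coe_real hlt
  have hev1 : ∀ᶠ k in atTop, (b : EReal) < f (w k) := hw.eventually (hlsc x b hb2)
  have hc : Tendsto (fun k => (⟪u k, x' - w k⟫ : ℝ)) atTop (𝓝 cinf) :=
    hu.inner (tendsto_const_nhds.sub hw)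
  have hqb : q - b < cinf := by
    rw [EReal.coe_lt_coe_iff] at hb1; linarith
  have hev2 : ∀ᶠ k in atTop, q - b < ⟪u k, x' - w k⟫ := hc.eventually (eventually_gt_nhds hqb)
  obtain ⟨k, hk1, hk2⟩ := (hev1.and hev2).exists
  have hs := hsub k x'
  have hwk_ne_top : f (w k) ≠ ⊤ := ama_ne_top hs hx'
  have hpk := EReal.coe_toReal hwk_ne_top (hne (w k))
  rw [← hpk] at hk1 hs
  rw [← hq, ← EReal.coe_add, EReal.coe_le_coe_iff] at hs
  rw [EReal.coe_lt_coe_iff] at hk1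
  linarith



/-- From psd self-adjoint `S`: Cauchy–Schwarz `⟪u, S w⟫² ≤ ⟪u,Su⟫⟪w,Sw⟫`. -/
lemma ama_CS {E : Type*} [NormedAddCommGroup E] [InnerProductSpace ℝ E]
    (S : E →L[ℝ] E) (hsa : ∀ u v : E, ⟪S u, v⟫ = ⟪u, S v⟫) (hpsd : ∀ w : E, 0 ≤ ⟪w, S w⟫)
    (u w : E) : ⟪u, S w⟫^2 ≤ ⟪u, S u⟫ * ⟪w, S w⟫ := by
  apply ama_discrim (hpsd w)
  intro l
  have h0 := hpsd (u + l • w)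
  have e : ⟪u + l•w, S (u + l•w)⟫ = ⟪u,S u⟫ + 2*l*⟪u,S w⟫ + l^2*⟪w, S w⟫ := by
    simp only [map_add, map_smul, inner_add_left, inner_add_right, real_inner_smul_left,
      real_inner_smul_right]
    have h1 : ⟪w, S u⟫ = ⟪u, S w⟫ := by rw [← hsa u w, real_inner_comm]
    rw [h1]; ring
  linarith [e ▸ h0]

lemma ama_cross {E : Type*} [NormedAddCommGroup E] [InnerProductSpace ℝ E]
    (S : E →L[ℝ] E) (hsa : ∀ u v : E, ⟪S u, v⟫ = ⟪u, S v⟫) (hpsd : ∀ w : E, 0 ≤ ⟪w, S w⟫)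
    (u w : E) : |2 * ⟪u, S w⟫| ≤ ⟪u, S u⟫ + ⟪w, S w⟫ := by
  have h := ama_CS S hsa hpsd u w
  have h1 := hpsd u; have h2 := hpsd w
  rw [abs_le]
  constructor <;> nlinarith [sq_nonneg (⟪u,S u⟫ - ⟪w, S w⟫)]

lemma ama_T_bound {E : Type*} [NormedAddCommGroup E] [InnerProductSpace ℝ E]
    (S : E →L[ℝ] E) (hsa : ∀ u v : E, ⟪S u, v⟫ = ⟪u, S v⟫) (hpsd : ∀ w : E, 0 ≤ ⟪w, S w⟫)
    (w : E) : ‖S w‖^2 ≤ ‖S‖ * ⟪w, S w⟫ := by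
  have h := ama_CS S hsa hpsd (S w) w
  have h2 : ⟪S w, S w⟫ = ‖S w‖^2 := real_inner_self_eq_norm_sq _
  have h3 : ⟪S w, S (S w)⟫ ≤ ‖S‖ * ‖S w‖^2 := by
    calc ⟪S w, S (S w)⟫ ≤ ‖S w‖ * ‖S (S w)‖ := real_inner_le_norm _ _
    _ ≤ ‖S w‖ * (‖S‖ * ‖S w‖) := by
        have := S.le_opNorm (S w)
        exact mul_le_mul_of_nonneg_left this (norm_nonneg _)
    _ = ‖S‖ * ‖S w‖^2 := by ring
  rw [h2] at h
  by_cases h0 : ‖S w‖ = 0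
  · rw [h0]; nlinarith [mul_nonneg S.opNorm_nonneg (hpsd w)]
  · have h4 : 0 < ‖S w‖^2 := by positivity
    nlinarith [hpsd w, norm_nonneg (S w), S.opNorm_nonneg]

/-- `‖w t‖² → 0` implies `w t → 0`. -/
lemma ama_sq_to_zero {E : Type*} [NormedAddCommGroup E] {w : ℕ → E}
    (h : Tendsto (fun t => ‖w t‖^2) atTop (𝓝 0)) : Tendsto w atTop (𝓝 0) := by
  rw [tendsto_zero_iff_norm_tendsto_zero]
  have h2 : Tendsto (fun t => Real.sqrt (‖w t‖^2)) atTop (𝓝 (Real.sqrt 0)) :=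
    (Real.continuous_sqrt.tendsto 0).comp h
  simpa [Real.sqrt_sq (norm_nonneg _)] using h2

open ContinuousLinearMap (adjoint)

set_option maxHeartbeats 1000000

/-- **Convergence of the proximal AMA (Theorem 3.1).**
Under assumption A1 and the parameter conditions (i), (ii), the iterates
`(xₜ, yₜ, zₜ)` of the proximal AMA converge to a limit `(x⋄, y⋄, z⋄)` with
`A*z⋄ ∈ ∂f(x⋄)`, `B*z⋄ ∈ ∂g(y⋄)`, `Ax⋄ + By⋄ = c`; in particular `(x⋄, y⋄)`
is primal optimal and `z⋄` is dual optimal (a Lagrange multiplier). -/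
theorem stmt_0
    {X Y Z : Type*}
    [NormedAddCommGroup X] [InnerProductSpace ℝ X] [FiniteDimensional ℝ X]
    [NormedAddCommGroup Y] [InnerProductSpace ℝ Y] [FiniteDimensional ℝ Y]
    [NormedAddCommGroup Z] [InnerProductSpace ℝ Z] [FiniteDimensional ℝ Z]
    (f : X → EReal) (g : Y → EReal)
    -- `f` and `g` are proper
    (hf_ne_bot : ∀ x, f x ≠ ⊥) (hf_proper : ∃ x, f x ≠ ⊤)
    (hg_ne_bot : ∀ y, g y ≠ ⊥) (hg_proper : ∃ y, g y ≠ ⊤)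
    -- `f` and `g` are closed
    (hf_lsc : LowerSemicontinuous f) (hg_lsc : LowerSemicontinuous g)
    -- `f` and `g` are convex
    (hf_cvx : ∀ (x₁ x₂ : X) (a b : ℝ), 0 ≤ a → 0 ≤ b → a + b = 1 →
      f (a • x₁ + b • x₂) ≤ (a : EReal) * f x₁ + (b : EReal) * f x₂)
    (hg_cvx : ∀ (y₁ y₂ : Y) (a b : ℝ), 0 ≤ a → 0 ≤ b → a + b = 1 →
      g (a • y₁ + b • y₂) ≤ (a : EReal) * g y₁ + (b : EReal) * g y₂)
    (A : X →L[ℝ] Z) (B : Y →L[ℝ] Z) (c : Z)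
    (Sf : X →L[ℝ] X) (Sg : Y →L[ℝ] Y) (T : Y →L[ℝ] Y)
    -- `Sf ≻ 0`, `Sg ⪰ 0`, `T ⪰ 0` are self-adjoint
    (hSf_sa : ∀ u v : X, ⟪Sf u, v⟫ = ⟪u, Sf v⟫)
    (hSg_sa : ∀ u v : Y, ⟪Sg u, v⟫ = ⟪u, Sg v⟫)
    (hT_sa : ∀ u v : Y, ⟪T u, v⟫ = ⟪u, T v⟫)
    (hSf_pd : ∀ x : X, x ≠ 0 → 0 < ⟪x, Sf x⟫)
    (hSg_psd : ∀ y : Y, 0 ≤ ⟪y, Sg y⟫)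
    (hT_psd : ∀ y : Y, 0 ≤ ⟪y, T y⟫)
    -- the subdifferential monotonicity conditions on `f` and `g`
    (hf_mono : ∀ (x₁ x₂ u₁ u₂ : X), IsSubgradAt f u₁ x₁ → IsSubgradAt f u₂ x₂ →
      ⟪x₁ - x₂, Sf (x₁ - x₂)⟫ ≤ ⟪u₁ - u₂, x₁ - x₂⟫)
    (hg_mono : ∀ (y₁ y₂ v₁ v₂ : Y), IsSubgradAt g v₁ y₁ → IsSubgradAt g v₂ y₂ →
      ⟪y₁ - y₂, Sg (y₁ - y₂)⟫ ≤ ⟪v₁ - v₂, y₁ - y₂⟫)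
    (β γ : ℝ) (hβ : 0 < β) (hγ : 0 < γ)
    (x : ℕ → X) (y : ℕ → Y) (z : ℕ → Z)
    -- the proximal AMA iterations
    (hx : ∀ (t : ℕ) (x' : X),
      f (x (t+1)) + ((-⟪z t, A (x (t+1))⟫ : ℝ) : EReal)
        ≤ f x' + ((-⟪z t, A x'⟫ : ℝ) : EReal))
    (hy : ∀ (t : ℕ) (y' : Y),
      g (y (t+1)) + ((-⟪z t, B (y (t+1))⟫ + β / 2 * ‖A (x (t+1)) + B (y (t+1)) - c‖ ^ 2
          + 1 / 2 * ⟪y (t+1) - y t, T (y (t+1) - y t)⟫ : ℝ) : EReal)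
        ≤ g y' + ((-⟪z t, B y'⟫ + β / 2 * ‖A (x (t+1)) + B y' - c‖ ^ 2
          + 1 / 2 * ⟪y' - y t, T (y' - y t)⟫ : ℝ) : EReal))
    (hz : ∀ t : ℕ, z (t+1) = z t - (γ * β) • (A (x (t+1)) + B (y (t+1)) - c))
    -- assumption A1
    (hA1 : ∃ (xb : X) (yb : Y) (zb : Z),
      IsSubgradAt f (ContinuousLinearMap.adjoint A zb) xb ∧
      IsSubgradAt g (ContinuousLinearMap.adjoint B zb) yb ∧
      A xb + B yb - c = 0)
    -- condition (i): `Sg + T + βB*B ≻ 0`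
    (hcond1 : ∀ w : Y, w ≠ 0 → 0 < ⟪w, Sg w⟫ + ⟪w, T w⟫ + β * ‖B w‖ ^ 2)
    -- condition (ii): for some `μ > 0`, `2Sf − (β+μ)A*A ≻ 0` and `γ < 1 + min{β,μ}/(2β)`
    (hcond2 : ∃ μ : ℝ, 0 < μ ∧
      (∀ w : X, w ≠ 0 → 0 < 2 * ⟪w, Sf w⟫ - (β + μ) * ‖A w‖ ^ 2) ∧
      γ < 1 + min β μ / (2 * β)) :
    ∃ (xd : X) (yd : Y) (zd : Z),
      Tendsto x atTop (𝓝 xd) ∧ Tendsto y atTop (𝓝 yd) ∧ Tendsto z atTop (𝓝 zd) ∧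
      IsSubgradAt f (ContinuousLinearMap.adjoint A zd) xd ∧
      IsSubgradAt g (ContinuousLinearMap.adjoint B zd) yd ∧
      A xd + B yd - c = 0 ∧
      -- `(x⋄, y⋄)` is an optimal solution of the primal problem
      (∀ (x' : X) (y' : Y), A x' + B y' = c → f xd + g yd ≤ f x' + g y') ∧
      -- `z⋄` is an optimal solution of the dual problem (a Lagrange multiplier)
      (∀ (x' : X) (y' : Y),
        f xd + g yd ≤ f x' + g y' + ((-⟪zd, A x' + B y' - c⟫ : ℝ) : EReal)) := by
  obtain ⟨xb, yb, zb, hfb, hgb, hfeasb⟩ := hA1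
  obtain ⟨μ, hμpos, hSfA, hγμ⟩ := hcond2
  -- parameter inequalities
  have hm1 : min β μ ≤ β := min_le_left _ _
  have hm2 : min β μ ≤ μ := min_le_right _ _
  have hm3 : 0 < min β μ := lt_min hβ hμpos
  have hγm : 2*β*(γ-1) < min β μ := by
    have h2β : (0:ℝ) < 2*β := by linarith
    have h' : γ - 1 < min β μ / (2*β) := by linarith
    calc 2*β*(γ-1) < 2*β*(min β μ/(2*β)) := by
          exact mul_lt_mul_of_pos_left h' h2β
    _ = min β μ := by field_simp
  have hγ32 : γ < 3/2 := by nlinarith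
  have hl1 : 0 < β + μ - γ*β := by
    rcases le_or_gt γ 1 with h|h
    · nlinarith
    · nlinarith
  have hl2 : 0 < β*(2-γ) := by nlinarith
  have hl3 : (β*(1-γ))^2 < (β+μ-γ*β)*(β*(2-γ)) := by
    have key : 0 < β*(1-γ) + μ*(2-γ) := by
      rcases le_or_gt γ 1 with h|h
      · nlinarith
      · nlinarith
    nlinarith [mul_pos hβ key]
  -- coercivity constants
  have hcont1 : Continuous (fun w : X => 2*⟪w, Sf w⟫ - (β+μ)*‖A w‖^2) := by
    apply Continuous.sub
    · exact continuous_const.mul (continuous_id.inner Sf.continuous)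
    · exact continuous_const.mul ((A.continuous.norm).pow 2)
  have hhom1 : ∀ (s : ℝ) (w : X),
      (fun w : X => 2*⟪w, Sf w⟫ - (β+μ)*‖A w‖^2) (s • w)
        = s^2 * (fun w : X => 2*⟪w, Sf w⟫ - (β+μ)*‖A w‖^2) w := by
    intro s w
    simp only [map_smul, real_inner_smul_left, real_inner_smul_right, norm_smul,
      Real.norm_eq_abs, mul_pow, sq_abs]
    ring
  obtain ⟨ε, hεpos, hq1⟩ := ama_coercive (fun w : X => 2*⟪w, Sf w⟫ - (β+μ)*‖A w‖^2)
    hcont1 hhom1 (fun w hw => hSfA w hw)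
  have hcont2 : Continuous (fun w : Y => ⟪w, Sg w⟫ + ⟪w, T w⟫ + β*‖B w‖^2) := by
    apply Continuous.add
    · exact (continuous_id.inner Sg.continuous).add (continuous_id.inner T.continuous)
    · exact continuous_const.mul ((B.continuous.norm).pow 2)
  have hhom2 : ∀ (s : ℝ) (w : Y),
      (fun w : Y => ⟪w, Sg w⟫ + ⟪w, T w⟫ + β*‖B w‖^2) (s • w)
        = s^2 * (fun w : Y => ⟪w, Sg w⟫ + ⟪w, T w⟫ + β*‖B w‖^2) w := by
    intro s w
    simp only [map_smul, real_inner_smul_left, real_inner_smul_right, norm_smul,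
      Real.norm_eq_abs, mul_pow, sq_abs]
    ring
  obtain ⟨ρ, hρpos, hq2⟩ := ama_coercive (fun w : Y => ⟪w, Sg w⟫ + ⟪w, T w⟫ + β*‖B w‖^2)
    hcont2 hhom2 (fun w hw => hcond1 w hw)
  obtain ⟨η, hηpos, hquad⟩ := ama_twovar (Z := Z) (β+μ-γ*β) (β*(2-γ)) (β*(1-γ)) hl1 hl2 hl3
  have hK : (0:ℝ) < γ*β := mul_pos hγ hβ
  -- residuals and auxiliary sequences
  set r : ℕ → Z := fun t => A (x (t+1)) + B (y (t+1)) - c with hrdef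
  set d : ℕ → Y := fun t => y (t+1) - y t with hddef
  set v : ℕ → Y := fun t => adjoint B (z t) - β • (adjoint B (r t)) - T (d t) with hvdef
  -- subgradient relations along the iterates
  have hfs : ∀ t, IsSubgradAt f (adjoint A (z t)) (x (t+1)) := by
    intro t
    apply ama_subgrad_linear f hf_ne_bot hf_proper
    intro x'
    simpa only [ContinuousLinearMap.adjoint_inner_left] using hx t x'
  have hgs : ∀ t, IsSubgradAt g (v t) (y (t+1)) := by
    intro t
    apply ama_subgrad_prox g hg_ne_bot hg_proper hg_cvx
      (fun y' => -⟪z t, B y'⟫ + β / 2 * ‖A (x (t+1)) + B y' - c‖ ^ 2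
          + 1 / 2 * ⟪y' - y t, T (y' - y t)⟫)
      (v t) (y (t+1)) (fun w => β/2*‖B w‖^2 + 1/2*⟪w, T w⟫)
    · intro w
      have h1 : (0:ℝ) ≤ β/2*‖B w‖^2 := by positivity
      linarith [hT_psd w]
    · intro w l
      have hvw : ⟪v t, w⟫ = ⟪z t, B w⟫ - β * ⟪A (x (t+1)) + B (y (t+1)) - c, B w⟫
          - ⟪y (t+1) - y t, T w⟫ := by
        simp only [hvdef, hrdef, hddef, inner_sub_left, real_inner_smul_left,
          ContinuousLinearMap.adjoint_inner_left, hT_sa]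
      have hBv : A (x (t+1)) + B (y (t+1) + l • w) - c
          = (A (x (t+1)) + B (y (t+1)) - c) + l • (B w) := by
        rw [map_add, map_smul]; abel
      have hTv : (y (t+1) + l • w) - y t = (y (t+1) - y t) + l • w := by abel
      have h2 : ⟪w, T (y (t+1) - y t)⟫ = ⟪y (t+1) - y t, T w⟫ := by
        rw [real_inner_comm, hT_sa]
      rw [hBv, hTv, hvw, norm_add_sq_real]
      simp only [map_add, map_smul, inner_add_left, inner_add_right, real_inner_smul_left,
        real_inner_smul_right, norm_smul, Real.norm_eq_abs, mul_pow, sq_abs]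
      linear_combination (l/2) * h2
    · exact fun y' => hy t y'
  -- the central descent estimate, valid for every KKT point
  have descent : ∀ (xk : X) (yk : Y) (zk : Z),
      IsSubgradAt f (adjoint A zk) xk → IsSubgradAt g (adjoint B zk) yk →
      A xk + B yk - c = 0 →
      ∀ t, ‖z (t+1) - zk‖^2 + γ*β*⟪y (t+1) - yk, T (y (t+1) - yk)⟫
          + γ*β*(ε*‖x (t+1) - xk‖^2 + 2*⟪y (t+1) - yk, Sg (y (t+1) - yk)⟫ + ⟪d t, T (d t)⟫
             + η*‖A (x (t+1) - xk)‖^2 + η*‖B (y (t+1) - yk)‖^2)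
        ≤ ‖z t - zk‖^2 + γ*β*⟪y t - yk, T (y t - yk)⟫ := by
    intro xk yk zk hfk hgk hfeask t
    have hck : A xk + B yk = c := sub_eq_zero.mp hfeask
    have hrk : r t = A (x (t+1) - xk) + B (y (t+1) - yk) := by
      simp only [hrdef, map_sub]
      rw [← hck]; abel
    have hdk : d t = (y (t+1) - yk) - (y t - yk) := by
      simp only [hddef]; abel
    have ineq1 : ⟪x (t+1) - xk, Sf (x (t+1) - xk)⟫ ≤ ⟪z t - zk, A (x (t+1) - xk)⟫ := by
      have h0 := hf_mono (x (t+1)) xk (adjoint A (z t)) (adjoint A zk) (hfs t) hfk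
      rwa [← map_sub, ContinuousLinearMap.adjoint_inner_left] at h0
    have eT2 : ⟪T (d t), y (t+1) - yk⟫
        = (⟪y (t+1) - yk, T (y (t+1) - yk)⟫ - ⟪y t - yk, T (y t - yk)⟫ + ⟪d t, T (d t)⟫)/2 := by
      rw [hdk]
      generalize y (t+1) - yk = a
      generalize y t - yk = b
      simp only [map_sub, inner_sub_left, inner_sub_right]
      have h1 : ⟪T a, b⟫ = ⟪a, T b⟫ := hT_sa _ _
      have h2 : ⟪T b, a⟫ = ⟪b, T a⟫ := hT_sa _ _
      have h3 : ⟪b, T a⟫ = ⟪T a, b⟫ := real_inner_comm _ _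
      have h5 : ⟪a, T b⟫ = ⟪T b, a⟫ := real_inner_comm _ _
      have h4 : ⟪T a, a⟫ = ⟪a, T a⟫ := hT_sa _ _
      linarith
    have ineq2 : ⟪y (t+1) - yk, Sg (y (t+1) - yk)⟫
        ≤ ⟪z t - zk, B (y (t+1) - yk)⟫
          - β*(⟪A (x (t+1) - xk), B (y (t+1) - yk)⟫ + ‖B (y (t+1) - yk)‖^2)
          - (⟪y (t+1) - yk, T (y (t+1) - yk)⟫ - ⟪y t - yk, T (y t - yk)⟫ + ⟪d t, T (d t)⟫)/2 := by
      have h0 := hg_mono (y (t+1)) yk (v t) (adjoint B zk) (hgs t) hgk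
      have e : ⟪v t - adjoint B zk, y (t+1) - yk⟫
          = ⟪z t - zk, B (y (t+1) - yk)⟫ - β*⟪r t, B (y (t+1) - yk)⟫
            - ⟪T (d t), y (t+1) - yk⟫ := by
        simp only [hvdef, inner_sub_left, real_inner_smul_left,
          ContinuousLinearMap.adjoint_inner_left, map_sub, inner_sub_right]
        ring
      rw [e] at h0
      have er : ⟪r t, B (y (t+1) - yk)⟫
          = ⟪A (x (t+1) - xk), B (y (t+1) - yk)⟫ + ‖B (y (t+1) - yk)‖^2 := by
        rw [hrk, inner_add_left, real_inner_self_eq_norm_sq]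
      rw [er, eT2] at h0
      linarith
    have ez : ‖z (t+1) - zk‖^2
        = ‖z t - zk‖^2 - 2*(γ*β)*(⟪z t - zk, A (x (t+1) - xk)⟫ + ⟪z t - zk, B (y (t+1) - yk)⟫)
          + (γ*β)^2*(‖A (x (t+1) - xk)‖^2 + 2*⟪A (x (t+1) - xk), B (y (t+1) - yk)⟫
              + ‖B (y (t+1) - yk)‖^2) := by
      have e1 : z (t+1) - zk = (z t - zk) - (γ*β) • (A (x (t+1) - xk) + B (y (t+1) - yk)) := by
        rw [hz t, ← hrk]
        simp only [hrdef]
        abel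
      rw [e1, norm_sub_sq_real]
      simp only [real_inner_smul_right, inner_add_right, norm_smul, Real.norm_eq_abs, mul_pow,
        sq_abs, norm_add_sq_real]
      ring
    have hq1' := hq1 (x (t+1) - xk)
    have hquad' := hquad (A (x (t+1) - xk)) (B (y (t+1) - yk))
    have m1 := mul_le_mul_of_nonneg_left ineq1 hK.le
    have m2 := mul_le_mul_of_nonneg_left ineq2 hK.le
    have m3 := mul_le_mul_of_nonneg_left hq1' hK.le
    have m4 := mul_le_mul_of_nonneg_left hquad' hK.le
    rw [ez]
    linarith [m1, m2, m3, m4]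
  -- Lyapunov analysis at the reference KKT point
  set Φ : ℕ → ℝ := fun t => ‖z t - zb‖^2 + γ*β*⟪y t - yb, T (y t - yb)⟫ with hPhidef
  set E : ℕ → ℝ := fun t => ε*‖x (t+1) - xb‖^2 + 2*⟪y (t+1) - yb, Sg (y (t+1) - yb)⟫
      + ⟪d t, T (d t)⟫ + η*‖A (x (t+1) - xb)‖^2 + η*‖B (y (t+1) - yb)‖^2 with hEdef2
  have hdescb := descent xb yb zb hfb hgb hfeasb
  have hstep : ∀ t, Φ (t+1) + γ*β*(E t) ≤ Φ t := by
    intro t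
    have h0 := hdescb t
    simp only [hPhidef, hEdef2]
    linarith
  have hE_nonneg : ∀ t, 0 ≤ E t := by
    intro t
    have h1 : (0:ℝ) ≤ ε*‖x (t+1) - xb‖^2 := by positivity
    have h2 := hSg_psd (y (t+1) - yb)
    have h3 := hT_psd (d t)
    have h4 : (0:ℝ) ≤ η*‖A (x (t+1) - xb)‖^2 := by positivity
    have h5 : (0:ℝ) ≤ η*‖B (y (t+1) - yb)‖^2 := by positivity
    simp only [hEdef2]; linarith
  have hPhi_nonneg : ∀ t, 0 ≤ Φ t := by
    intro t
    have h1 : (0:ℝ) ≤ ‖z t - zb‖^2 := by positivity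
    have h2 := mul_nonneg hK.le (hT_psd (y t - yb))
    simp only [hPhidef]; linarith
  have hPhi_anti : Antitone Φ := by
    refine antitone_nat_of_succ_le fun t => ?_
    have h1 := hstep t
    have h2 := mul_nonneg hK.le (hE_nonneg t)
    linarith
  have hPhi_bdd : BddBelow (Set.range Φ) := ⟨0, by rintro a ⟨t, rfl⟩; exact hPhi_nonneg t⟩
  have hPhi_tend : Tendsto Φ atTop (𝓝 (⨅ t, Φ t)) := tendsto_atTop_ciInf hPhi_anti hPhi_bdd
  have hdiff_tend : Tendsto (fun t => Φ t - Φ (t+1)) atTop (𝓝 0) := by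
    have h2 : Tendsto (fun t => Φ (t+1)) atTop (𝓝 (⨅ t, Φ t)) :=
      (tendsto_add_atTop_iff_nat 1).2 hPhi_tend
    simpa using hPhi_tend.sub h2
  have hE_tend : Tendsto E atTop (𝓝 0) := by
    apply squeeze_zero hE_nonneg (g := fun t => (Φ t - Φ (t+1))/(γ*β))
    · intro t
      rw [le_div_iff₀ hK]
      linarith [hstep t, mul_comm (E t) (γ*β)]
    · simpa using hdiff_tend.div_const (γ*β)
  have hbound : ∀ t, ε*‖x (t+1) - xb‖^2 ≤ E t ∧ 2*⟪y (t+1) - yb, Sg (y (t+1) - yb)⟫ ≤ E t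
      ∧ ⟪d t, T (d t)⟫ ≤ E t ∧ η*‖A (x (t+1) - xb)‖^2 ≤ E t ∧ η*‖B (y (t+1) - yb)‖^2 ≤ E t := by
    intro t
    have h1 : (0:ℝ) ≤ ε*‖x (t+1) - xb‖^2 := by positivity
    have h2 := hSg_psd (y (t+1) - yb)
    have h3 := hT_psd (d t)
    have h4 : (0:ℝ) ≤ η*‖A (x (t+1) - xb)‖^2 := by positivity
    have h5 : (0:ℝ) ≤ η*‖B (y (t+1) - yb)‖^2 := by positivity
    simp only [hEdef2]
    refine ⟨by linarith, by linarith, by linarith, by linarith, by linarith⟩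
  have hcomp : ∀ (F : ℕ → ℝ) (cF : ℝ), 0 < cF → (∀ t, 0 ≤ F t) → (∀ t, cF * F t ≤ E t) →
      Tendsto F atTop (𝓝 0) := by
    intro F cF hcF h1 h2
    apply squeeze_zero h1 (g := fun t => E t / cF)
    · intro t; rw [le_div_iff₀ hcF]; linarith [h2 t, mul_comm (F t) cF]
    · simpa using hE_tend.div_const cF
  have hNX : Tendsto (fun t => ‖x (t+1) - xb‖^2) atTop (𝓝 0) :=
    hcomp _ ε hεpos (fun t => by positivity) (fun t => (hbound t).1)
  have hS2 : Tendsto (fun t => ⟪y (t+1) - yb, Sg (y (t+1) - yb)⟫) atTop (𝓝 0) :=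
    hcomp _ 2 two_pos (fun t => hSg_psd _) (fun t => (hbound t).2.1)
  have hTD : Tendsto (fun t => ⟪d t, T (d t)⟫) atTop (𝓝 0) :=
    hcomp _ 1 one_pos (fun t => hT_psd _) (fun t => by simpa using (hbound t).2.2.1)
  have hNA : Tendsto (fun t => ‖A (x (t+1) - xb)‖^2) atTop (𝓝 0) :=
    hcomp _ η hηpos (fun t => by positivity) (fun t => (hbound t).2.2.2.1)
  have hNB : Tendsto (fun t => ‖B (y (t+1) - yb)‖^2) atTop (𝓝 0) :=
    hcomp _ η hηpos (fun t => by positivity) (fun t => (hbound t).2.2.2.2)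
  -- basic limits
  have hx1 : Tendsto (fun t => x (t+1)) atTop (𝓝 xb) := by
    have h1 := ama_sq_to_zero hNX
    simpa using h1.add (tendsto_const_nhds (x := xb))
  have hx_tend : Tendsto x atTop (𝓝 xb) := (tendsto_add_atTop_iff_nat 1).1 hx1
  have hAx : Tendsto (fun t => A (x (t+1) - xb)) atTop (𝓝 0) := ama_sq_to_zero hNA
  have hBy : Tendsto (fun t => B (y (t+1) - yb)) atTop (𝓝 0) := ama_sq_to_zero hNB
  have hS2' : Tendsto (fun t => ⟪y t - yb, Sg (y t - yb)⟫) atTop (𝓝 0) :=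
    (tendsto_add_atTop_iff_nat 1).1 hS2
  have hBy' : Tendsto (fun t => B (y t - yb)) atTop (𝓝 0) :=
    (tendsto_add_atTop_iff_nat 1).1 hBy
  have hcb : A xb + B yb = c := sub_eq_zero.mp hfeasb
  have hr0 : Tendsto r atTop (𝓝 0) := by
    have he : r = fun t => A (x (t+1) - xb) + B (y (t+1) - yb) := by
      funext t
      simp only [hrdef, map_sub]
      rw [← hcb]; abel
    rw [he]
    simpa using hAx.add hBy
  -- the inner-iterate differences d t tend to zero
  have hdk0 : ∀ t, d t = (y (t+1) - yb) - (y t - yb) := by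
    intro t; simp only [hddef]; abel
  have hdSg : Tendsto (fun t => ⟪d t, Sg (d t)⟫) atTop (𝓝 0) := by
    apply squeeze_zero (fun t => hSg_psd _)
      (g := fun t => 2*(⟪y (t+1) - yb, Sg (y (t+1) - yb)⟫ + ⟪y t - yb, Sg (y t - yb)⟫))
    · intro t
      have hcr := ama_cross Sg hSg_sa hSg_psd (y (t+1) - yb) (y t - yb)
      rw [hdk0 t]
      generalize y (t+1) - yb = a at hcr ⊢
      generalize y t - yb = b at hcr ⊢
      simp only [map_sub, inner_sub_left, inner_sub_right]
      have h1 : ⟪b, Sg a⟫ = ⟪a, Sg b⟫ := by rw [← hSg_sa, real_inner_comm]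
      have h2 := abs_le.1 hcr
      linarith [h2.1, h2.2]
    · have := (hS2.add hS2').const_mul 2
      simpa using this
  have hBd : Tendsto (fun t => B (d t)) atTop (𝓝 0) := by
    have he : (fun t => B (d t)) = fun t => B (y (t+1) - yb) - B (y t - yb) := by
      funext t; rw [hdk0 t, map_sub]
    rw [he]
    simpa using hBy.sub hBy'
  have hd0 : Tendsto d atTop (𝓝 0) := by
    apply ama_sq_to_zero
    apply squeeze_zero (fun t => sq_nonneg _)
      (g := fun t => (⟪d t, Sg (d t)⟫ + ⟪d t, T (d t)⟫ + β*‖B (d t)‖^2)/ρ)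
    · intro t
      rw [le_div_iff₀ hρpos]
      linarith [hq2 (d t), mul_comm (‖d t‖^2) ρ]
    · have hBn : Tendsto (fun t => β*‖B (d t)‖^2) atTop (𝓝 0) := by
        have h3 : Tendsto (fun t => ‖B (d t)‖) atTop (𝓝 0) := by simpa using hBd.norm
        simpa using (h3.pow 2).const_mul β
      simpa using ((hdSg.add hTD).add hBn).div_const ρ
  -- boundedness of the pair sequence and extraction of a convergent subsequence
  have hsqrt : ∀ (a bo : ℝ), a^2 ≤ bo → 0 ≤ a → a ≤ Real.sqrt bo := by
    intro a bo h ha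
    have h2 := Real.sqrt_le_sqrt h
    rwa [Real.sqrt_sq ha] at h2
  have hzbound : ∀ t, ‖z t‖ ≤ ‖zb‖ + Real.sqrt (Φ 0) := by
    intro t
    have h4 : ‖z t - zb‖^2 ≤ Φ t := by
      simp only [hPhidef]; linarith [mul_nonneg hK.le (hT_psd (y t - yb))]
    have h1 : ‖z t - zb‖^2 ≤ Φ 0 := h4.trans (hPhi_anti (Nat.zero_le t))
    have h5 := hsqrt _ _ h1 (norm_nonneg _)
    calc ‖z t‖ = ‖zb + (z t - zb)‖ := by rw [show zb + (z t - zb) = z t by abel]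
    _ ≤ ‖zb‖ + ‖z t - zb‖ := norm_add_le _ _
    _ ≤ ‖zb‖ + Real.sqrt (Φ 0) := by linarith
  have hbddT : ∀ t, γ*β*⟪y (t+1) - yb, T (y (t+1) - yb)⟫ ≤ Φ 0 := by
    intro t
    have h4 : γ*β*⟪y (t+1) - yb, T (y (t+1) - yb)⟫ ≤ Φ (t+1) := by
      simp only [hPhidef]; nlinarith [sq_nonneg ‖z (t+1) - zb‖]
    exact h4.trans (hPhi_anti (Nat.zero_le (t+1)))
  obtain ⟨M1, hM1⟩ := hS2.bddAbove_range
  have hM1' : ∀ t, ⟪y (t+1) - yb, Sg (y (t+1) - yb)⟫ ≤ M1 := fun t =>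
    hM1 (Set.mem_range_self t)
  obtain ⟨M2, hM2⟩ := hNB.bddAbove_range
  have hM2' : ∀ t, ‖B (y (t+1) - yb)‖^2 ≤ M2 := fun t => hM2 (Set.mem_range_self t)
  have hybound : ∀ t, ‖y (t+1)‖
      ≤ ‖yb‖ + Real.sqrt ((γ*β*M1 + Φ 0 + γ*β*(β*M2))/(γ*β*ρ)) := by
    intro t
    have h6 : ‖y (t+1) - yb‖^2 ≤ (γ*β*M1 + Φ 0 + γ*β*(β*M2))/(γ*β*ρ) := by
      rw [le_div_iff₀ (mul_pos hK hρpos)]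
      have m1 := mul_le_mul_of_nonneg_left (hq2 (y (t+1) - yb)) hK.le
      have m2 := mul_le_mul_of_nonneg_left (hM1' t) hK.le
      have m3 := mul_le_mul_of_nonneg_left
        (mul_le_mul_of_nonneg_left (hM2' t) hβ.le) hK.le
      have m4 := hbddT t
      nlinarith [m1, m2, m3, m4]
    have h7 := hsqrt _ _ h6 (norm_nonneg _)
    calc ‖y (t+1)‖ = ‖yb + (y (t+1) - yb)‖ := by
          rw [show yb + (y (t+1) - yb) = y (t+1) by abel]
    _ ≤ ‖yb‖ + ‖y (t+1) - yb‖ := norm_add_le _ _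
    _ ≤ _ := by linarith
  set R : ℝ := max (‖yb‖ + Real.sqrt ((γ*β*M1 + Φ 0 + γ*β*(β*M2))/(γ*β*ρ)))
      (‖zb‖ + Real.sqrt (Φ 0)) with hRdef
  have hpmem : ∀ t, (⟨y (t+1), z t⟩ : Y × Z) ∈ Metric.closedBall (0 : Y × Z) R := by
    intro t
    rw [Metric.mem_closedBall, dist_zero_right, Prod.norm_def]
    apply max_le
    · exact (hybound t).trans (le_max_left _ _)
    · exact (hzbound t).trans (le_max_right _ _)
  obtain ⟨po, _, φ, hφmono, hφtend⟩ :=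
    tendsto_subseq_of_bounded Metric.isBounded_closedBall hpmem
  obtain ⟨yo, zo⟩ := po
  have hφat : Tendsto φ atTop atTop := hφmono.tendsto_atTop
  have hy1sub : Tendsto (fun k => y (φ k + 1)) atTop (𝓝 yo) :=
    (continuous_fst.tendsto _).comp hφtend
  have hzsub : Tendsto (fun k => z (φ k)) atTop (𝓝 zo) :=
    (continuous_snd.tendsto _).comp hφtend
  have hysub : Tendsto (fun k => y (φ k)) atTop (𝓝 yo) := by
    have h1 : Tendsto (fun k => d (φ k)) atTop (𝓝 0) := hd0.comp hφat
    have h2 := hy1sub.sub h1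
    rw [sub_zero] at h2
    have he : (fun k => y (φ k + 1) - d (φ k)) = fun k => y (φ k) := by
      funext k; simp only [hddef]; abel
    rwa [he] at h2
  -- the cluster point is a KKT point
  have hfinf : IsSubgradAt f (adjoint A zo) xb := by
    apply ama_subgrad_limit f hf_ne_bot hf_lsc (fun k => adjoint A (z (φ k)))
      (fun k => x (φ k + 1))
    · exact ((adjoint A).continuous.tendsto zo).comp hzsub
    · exact hx1.comp hφat
    · exact fun k => hfs (φ k)
  have hrsub0 : Tendsto (fun k => r (φ k)) atTop (𝓝 0) := hr0.comp hφat
  have hvsub : Tendsto (fun k => v (φ k)) atTop (𝓝 (adjoint B zo)) := by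
    have h1 : Tendsto (fun k => adjoint B (z (φ k))) atTop (𝓝 (adjoint B zo)) :=
      ((adjoint B).continuous.tendsto zo).comp hzsub
    have h2 : Tendsto (fun k => β • adjoint B (r (φ k))) atTop (𝓝 (β • adjoint B (0:Z))) :=
      (((adjoint B).continuous.tendsto 0).comp hrsub0).const_smul β
    have h3 : Tendsto (fun k => T (d (φ k))) atTop (𝓝 (T 0)) :=
      (T.continuous.tendsto 0).comp (hd0.comp hφat)
    have h4 := (h1.sub h2).sub h3
    simp only [map_zero, smul_zero, sub_zero] at h4
    have he : (fun k => v (φ k))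
        = fun k => adjoint B (z (φ k)) - β • adjoint B (r (φ k)) - T (d (φ k)) := by
      funext k; simp only [hvdef]
    rwa [he]
  have hginf : IsSubgradAt g (adjoint B zo) yo := by
    apply ama_subgrad_limit g hg_ne_bot hg_lsc (fun k => v (φ k)) (fun k => y (φ k + 1))
    · exact hvsub
    · exact hy1sub
    · exact fun k => hgs (φ k)
  have hfeaso : A xb + B yo - c = 0 := by
    have h1 : Tendsto (fun k => r (φ k)) atTop (𝓝 (A xb + B yo - c)) := by
      have h2 : Tendsto (fun k => A (x (φ k + 1))) atTop (𝓝 (A xb)) :=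
        (A.continuous.tendsto xb).comp (hx1.comp hφat)
      have h3 : Tendsto (fun k => B (y (φ k + 1))) atTop (𝓝 (B yo)) :=
        (B.continuous.tendsto yo).comp hy1sub
      have h4 := (h2.add h3).sub (tendsto_const_nhds (x := c))
      have he : (fun k => r (φ k)) = fun k => A (x (φ k + 1)) + B (y (φ k + 1)) - c := by
        funext k; simp only [hrdef]
      rwa [he]
    exact tendsto_nhds_unique h1 hrsub0
  -- second Lyapunov function, centered at the cluster point
  have hdesco := descent xb yo zo hfinf hginf hfeaso
  set Ψ : ℕ → ℝ := fun t => ‖z t - zo‖^2 + γ*β*⟪y t - yo, T (y t - yo)⟫ with hPsidef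
  have hPsi_anti : Antitone Ψ := by
    refine antitone_nat_of_succ_le fun t => ?_
    have h1 := hdesco t
    have h2 : (0:ℝ) ≤ ε*‖x (t+1) - xb‖^2 := by positivity
    have h3 := hSg_psd (y (t+1) - yo)
    have h4 := hT_psd (d t)
    have h5 : (0:ℝ) ≤ η*‖A (x (t+1) - xb)‖^2 := by positivity
    have h6 : (0:ℝ) ≤ η*‖B (y (t+1) - yo)‖^2 := by positivity
    have h7 : (0:ℝ) ≤ γ*β*(ε*‖x (t+1) - xb‖^2 + 2*⟪y (t+1) - yo, Sg (y (t+1) - yo)⟫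
        + ⟪d t, T (d t)⟫ + η*‖A (x (t+1) - xb)‖^2 + η*‖B (y (t+1) - yo)‖^2) :=
      mul_nonneg hK.le (by linarith)
    simp only [hPsidef]
    linarith
  have hPsi_nonneg : ∀ t, 0 ≤ Ψ t := by
    intro t
    have h1 : (0:ℝ) ≤ ‖z t - zo‖^2 := by positivity
    have h2 := mul_nonneg hK.le (hT_psd (y t - yo))
    simp only [hPsidef]; linarith
  have hPsi_tend : Tendsto Ψ atTop (𝓝 (⨅ t, Ψ t)) :=
    tendsto_atTop_ciInf hPsi_anti ⟨0, by rintro a ⟨t, rfl⟩; exact hPsi_nonneg t⟩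
  have hPsisub0 : Tendsto (fun k => Ψ (φ k)) atTop (𝓝 0) := by
    have h1 : Tendsto (fun k => ‖z (φ k) - zo‖^2) atTop (𝓝 0) := by
      have h0 : Tendsto (fun k => z (φ k) - zo) atTop (𝓝 0) := by
        simpa using hzsub.sub (tendsto_const_nhds (x := zo))
      simpa using (h0.norm).pow 2
    have h2 : Tendsto (fun k => ⟪y (φ k) - yo, T (y (φ k) - yo)⟫) atTop (𝓝 0) := by
      have h3 : Tendsto (fun k => y (φ k) - yo) atTop (𝓝 0) := by
        simpa using hysub.sub (tendsto_const_nhds (x := yo))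
      have h4 := Filter.Tendsto.inner (𝕜 := ℝ) h3 ((T.continuous.tendsto 0).comp h3)
      simpa using h4
    have h5 := h1.add (h2.const_mul (γ*β))
    simp only [hPsidef]
    simpa [mul_comm] using h5
  have hinf0 : (⨅ t, Ψ t) = 0 := tendsto_nhds_unique (hPsi_tend.comp hφat) hPsisub0
  have hPsi0 : Tendsto Ψ atTop (𝓝 0) := hinf0 ▸ hPsi_tend
  have hz_tend : Tendsto z atTop (𝓝 zo) := by
    have h1 : Tendsto (fun t => ‖z t - zo‖^2) atTop (𝓝 0) := by
      apply squeeze_zero (fun t => sq_nonneg _) (g := Ψ)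
      · intro t
        simp only [hPsidef]
        linarith [mul_nonneg hK.le (hT_psd (y t - yo))]
      · exact hPsi0
    simpa using (ama_sq_to_zero h1).add (tendsto_const_nhds (x := zo))
  have hqT0 : Tendsto (fun t => ⟪y t - yo, T (y t - yo)⟫) atTop (𝓝 0) := by
    apply squeeze_zero (fun t => hT_psd _) (g := fun t => Ψ t/(γ*β))
    · intro t
      rw [le_div_iff₀ hK]
      simp only [hPsidef]
      nlinarith [sq_nonneg ‖z t - zo‖,
        mul_comm (⟪y t - yo, T (y t - yo)⟫ : ℝ) (γ*β)]
    · simpa using hPsi0.div_const (γ*β)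
  have hSgw : ⟪yo - yb, Sg (yo - yb)⟫ = 0 := by
    have h3 : Tendsto (fun k => y (φ k) - yb) atTop (𝓝 (yo - yb)) :=
      hysub.sub tendsto_const_nhds
    have h1 : Tendsto (fun k => ⟪y (φ k) - yb, Sg (y (φ k) - yb)⟫) atTop
        (𝓝 ⟪yo - yb, Sg (yo - yb)⟫) :=
      Filter.Tendsto.inner (𝕜 := ℝ) h3 ((Sg.continuous.tendsto _).comp h3)
    exact tendsto_nhds_unique h1 (hS2'.comp hφat)
  have hBw : B (yo - yb) = 0 := by
    have h1 : Tendsto (fun k => B (y (φ k) - yb)) atTop (𝓝 (B (yo - yb))) :=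
      (B.continuous.tendsto _).comp (hysub.sub tendsto_const_nhds)
    exact tendsto_nhds_unique h1 (hBy'.comp hφat)
  have hSgcross : ∀ u : Y, ⟪u, Sg (yo - yb)⟫ = 0 := by
    intro u
    have h1 := ama_CS Sg hSg_sa hSg_psd u (yo - yb)
    rw [hSgw, mul_zero] at h1
    have h2 := sq_nonneg (⟪u, Sg (yo - yb)⟫ : ℝ)
    have h3 : (⟪u, Sg (yo - yb)⟫ : ℝ)^2 = 0 := le_antisymm h1 h2
    exact pow_eq_zero_iff two_ne_zero |>.1 h3
  have hSgshift : ∀ t, ⟪y t - yo, Sg (y t - yo)⟫ = ⟪y t - yb, Sg (y t - yb)⟫ := by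
    intro t
    have he : y t - yo = (y t - yb) - (yo - yb) := by abel
    rw [he]
    have h1 := hSgcross (y t - yb)
    have h2 : ⟪yo - yb, Sg (y t - yb)⟫ = 0 := by
      rw [← hSg_sa, real_inner_comm]; exact hSgcross _
    have hw := hSgw
    generalize y t - yb = a at h1 h2 ⊢
    generalize yo - yb = b at h1 h2 hw ⊢
    simp only [map_sub, inner_sub_left, inner_sub_right]
    linarith [h1, h2, hw]
  have hqSg0 : Tendsto (fun t => ⟪y t - yo, Sg (y t - yo)⟫) atTop (𝓝 0) := by
    simp only [hSgshift]; exact hS2'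
  have hB0 : Tendsto (fun t => B (y t - yo)) atTop (𝓝 0) := by
    have he : ∀ t, B (y t - yo) = B (y t - yb) - B (yo - yb) := by
      intro t; rw [← map_sub]; congr 1; abel
    simp only [he, hBw, sub_zero]
    exact hBy'
  have hy_tend : Tendsto y atTop (𝓝 yo) := by
    have h1 : Tendsto (fun t => ‖y t - yo‖^2) atTop (𝓝 0) := by
      apply squeeze_zero (fun t => sq_nonneg _)
        (g := fun t => (⟪y t - yo, Sg (y t - yo)⟫ + ⟪y t - yo, T (y t - yo)⟫
          + β*‖B (y t - yo)‖^2)/ρ)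
      · intro t
        rw [le_div_iff₀ hρpos]
        linarith [hq2 (y t - yo), mul_comm (‖y t - yo‖^2) ρ]
      · have hb : Tendsto (fun t => β*‖B (y t - yo)‖^2) atTop (𝓝 0) := by
          have h3 : Tendsto (fun t => ‖B (y t - yo)‖) atTop (𝓝 0) := by simpa using hB0.norm
          simpa using (h3.pow 2).const_mul β
        simpa using ((hqSg0.add hqT0).add hb).div_const ρ
    simpa using (ama_sq_to_zero h1).add (tendsto_const_nhds (x := yo))
  -- optimality of the limit
  have hfxb_ne_top : f xb ≠ ⊤ := by
    obtain ⟨x₀, h₀⟩ := hf_proper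
    intro hc
    have h1 := hfinf x₀
    rw [hc, EReal.top_add_coe] at h1
    exact h₀ (top_le_iff.1 h1)
  have hgyo_ne_top : g yo ≠ ⊤ := by
    obtain ⟨y₀, h₀⟩ := hg_proper
    intro hc
    have h1 := hginf y₀
    rw [hc, EReal.top_add_coe] at h1
    exact h₀ (top_le_iff.1 h1)
  have hcyo : A xb + B yo = c := sub_eq_zero.mp hfeaso
  have opt2 : ∀ (x' : X) (y' : Y),
      f xb + g yo ≤ f x' + g y' + ((-⟪zo, A x' + B y' - c⟫ : ℝ) : EReal) := by
    intro x' y'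
    have hF := EReal.coe_toReal hfxb_ne_top (hf_ne_bot xb)
    have hG := EReal.coe_toReal hgyo_ne_top (hg_ne_bot yo)
    by_cases hx' : f x' = ⊤
    · rw [hx', EReal.top_add_of_ne_bot (hg_ne_bot y'), EReal.top_add_coe]
      exact le_top
    by_cases hy'' : g y' = ⊤
    · rw [hy'', EReal.add_top_of_ne_bot (hf_ne_bot x'), EReal.top_add_coe]
      exact le_top
    · have hp' := EReal.coe_toReal hx' (hf_ne_bot x')
      have hq'' := EReal.coe_toReal hy'' (hg_ne_bot y')
      have h1 := hfinf x'
      have h2 := hginf y'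
      rw [← hF, ← hp', ← EReal.coe_add, EReal.coe_le_coe_iff] at h1
      rw [← hG, ← hq'', ← EReal.coe_add, EReal.coe_le_coe_iff] at h2
      rw [← hF, ← hG, ← hp', ← hq'', ← EReal.coe_add, ← EReal.coe_add, ← EReal.coe_add,
        EReal.coe_le_coe_iff]
      have e1 : ⟪adjoint A zo, x' - xb⟫ = ⟪zo, A x'⟫ - ⟪zo, A xb⟫ := by
        rw [ContinuousLinearMap.adjoint_inner_left, map_sub, inner_sub_right]
      have e2 : ⟪adjoint B zo, y' - yo⟫ = ⟪zo, B y'⟫ - ⟪zo, B yo⟫ := by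
        rw [ContinuousLinearMap.adjoint_inner_left, map_sub, inner_sub_right]
      have e3 : ⟪zo, A x' + B y' - c⟫ = ⟪zo, A x'⟫ + ⟪zo, B y'⟫ - (⟪zo, A xb⟫ + ⟪zo, B yo⟫) := by
        rw [← hcyo]
        simp only [inner_sub_right, inner_add_right]
      rw [e1] at h1
      rw [e2] at h2
      rw [e3]
      linarith
  have opt1 : ∀ (x' : X) (y' : Y), A x' + B y' = c → f xb + g yo ≤ f x' + g y' := by
    intro x' y' hcon
    have h1 := opt2 x' y'
    rw [hcon, sub_self, inner_zero_right, neg_zero] at h1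
    simpa using h1
  exact ⟨xb, yo, zo, hx_tend, hy_tend, hz_tend, hfinf, hginf, hfeaso, opt1, opt2⟩
end

section
/- Let {(x^t, y^t, z^t)} be generated by the proximal AMA with parameters β>0, γ>0, T ⪰ 0, let μ>0, and let (x̄, ȳ, z̄) satisfy assumption A1. Write w_e^t = w^t − w̄ for w ∈ {x,y,z} and S = 2Σ_f − (β+μ)A*A. Then for every t ≥ 0 and every α > 0: ((1/(γβ))‖z_e^t‖² + ‖y_e^t‖²_T) − ((1/(γβ))‖z_e^{t+1}‖² + ‖y_e^{t+1}‖²_T) ≥ ‖x_e^{t+1}‖²_S + 2‖y_e^{t+1}‖²_{Σ_g} + ‖y^{t+1} − y^t‖²_T + (β − α)‖By_e^{t+1}‖² + (1/(γ²β))(min{α,μ}/(2β) + 1 − γ)‖z^{t+1} − z^t‖². -/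
open RealInnerProductSpace Filter Topology

lemma ereal_coe_add_eq_top {q : EReal} {b : ℝ} (h : q + (b:EReal) = ⊤) : q = ⊤ := by
  induction q using EReal.rec with
  | bot => simp at h
  | coe a => rw [← EReal.coe_add] at h; exact absurd h (EReal.coe_ne_top _)
  | top => rfl

lemma ereal_ne_top {p q : EReal} {a b : ℝ} (h : p + (a:EReal) ≤ q + (b:EReal)) (hq : q ≠ ⊤) :
    p ≠ ⊤ := by
  intro hp
  rw [hp, EReal.top_add_coe, top_le_iff] at h
  exact hq (ereal_coe_add_eq_top h)

lemma ereal_shift {p q : EReal} {a b : ℝ} (hpb : p ≠ ⊥) (hpt : p ≠ ⊤) (hqb : q ≠ ⊥)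
    (h : p + (a : EReal) ≤ q + (b : EReal)) : p + ((a - b : ℝ) : EReal) ≤ q := by
  by_cases hqt : q = ⊤
  · rw [hqt]; exact le_top
  lift p to ℝ using ⟨hpt, hpb⟩
  lift q to ℝ using ⟨hqt, hqb⟩
  rw [← EReal.coe_add, ← EReal.coe_add, EReal.coe_le_coe_iff] at h
  rw [← EReal.coe_add, EReal.coe_le_coe_iff]
  linarith


lemma scalar_key (β γ μ α m e1 e2 p na nb tz uz td tc te nz : ℝ)
    (hβ : 0 < β) (hγ : 0 < γ)
    (hmα : m ≤ α) (hmμ : m ≤ μ) (hm0 : 0 < m)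
    (hna : 0 ≤ na) (hnb : 0 ≤ nb)
    (F1 : e1 ≤ tz)
    (F2 : e2 ≤ uz - β * (p + nb) - tc)
    (F9 : 2*p ≤ na + nb) :
    (2 * e1 - (β + μ) * na) + 2 * e2 + td + (β - α) * nb
      + 1 / (γ^2 * β) * (m / (2*β) + 1 - γ) * ((γ*β)^2 * (na + 2*p + nb))
    ≤ (1 / (γ*β) * nz + (te - 2*tc + td))
      - (1 / (γ*β) * (nz - 2*(γ*β)*(tz + uz) + (γ*β)^2 * (na + 2*p + nb)) + te) := by
  have hβ0 : β ≠ 0 := hβ.ne'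
  have hγ0 : γ ≠ 0 := hγ.ne'
  have h1 : 1 / (γ^2 * β) * (m / (2*β) + 1 - γ) * ((γ*β)^2 * (na + 2*p + nb))
      = (m/2 + β - γ*β) * (na + 2*p + nb) := by field_simp
  have h2 : (1 / (γ*β) * nz + (te - 2*tc + td))
      - (1 / (γ*β) * (nz - 2*(γ*β)*(tz + uz) + (γ*β)^2 * (na + 2*p + nb)) + te)
      = 2*(tz + uz) - (γ*β)*(na + 2*p + nb) + td - 2*tc := by field_simp; ring
  rw [h1, h2]
  nlinarith [mul_le_mul_of_nonneg_left F9 hm0.le,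
    mul_nonneg (by linarith : (0:ℝ) ≤ μ - m) hna,
    mul_nonneg (by linarith : (0:ℝ) ≤ α - m) hnb]


set_option maxHeartbeats 2000000 in
/-- **The key one-step inequality for the proximal AMA (from the proof of Theorem 3.1).**
With `w_e^t = w^t − w̄` and `S = 2Σ_f − (β+μ)A*A`, for every `t ≥ 0` and `α > 0`,
`(1/(γβ)‖z_e^t‖² + ‖y_e^t‖²_T) − (1/(γβ)‖z_e^{t+1}‖² + ‖y_e^{t+1}‖²_T)
 ≥ ‖x_e^{t+1}‖²_S + 2‖y_e^{t+1}‖²_{Σg} + ‖y^{t+1}−y^t‖²_T + (β−α)‖By_e^{t+1}‖²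
   + (1/(γ²β))(min{α,μ}/(2β) + 1 − γ)‖z^{t+1}−z^t‖²`. -/
theorem stmt_1
    {X Y Z : Type*}
    [NormedAddCommGroup X] [InnerProductSpace ℝ X] [FiniteDimensional ℝ X]
    [NormedAddCommGroup Y] [InnerProductSpace ℝ Y] [FiniteDimensional ℝ Y]
    [NormedAddCommGroup Z] [InnerProductSpace ℝ Z] [FiniteDimensional ℝ Z]
    (f : X → EReal) (g : Y → EReal)
    -- `f` and `g` are proper
    (hf_ne_bot : ∀ x, f x ≠ ⊥) (hf_proper : ∃ x, f x ≠ ⊤)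
    (hg_ne_bot : ∀ y, g y ≠ ⊥) (hg_proper : ∃ y, g y ≠ ⊤)
    -- `f` and `g` are closed
    (hf_lsc : LowerSemicontinuous f) (hg_lsc : LowerSemicontinuous g)
    -- `f` and `g` are convex
    (hf_cvx : ∀ (x₁ x₂ : X) (a b : ℝ), 0 ≤ a → 0 ≤ b → a + b = 1 →
      f (a • x₁ + b • x₂) ≤ (a : EReal) * f x₁ + (b : EReal) * f x₂)
    (hg_cvx : ∀ (y₁ y₂ : Y) (a b : ℝ), 0 ≤ a → 0 ≤ b → a + b = 1 →
      g (a • y₁ + b • y₂) ≤ (a : EReal) * g y₁ + (b : EReal) * g y₂)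
    (A : X →L[ℝ] Z) (B : Y →L[ℝ] Z) (c : Z)
    (Sf : X →L[ℝ] X) (Sg : Y →L[ℝ] Y) (T : Y →L[ℝ] Y)
    -- `Sf ≻ 0`, `Sg ⪰ 0`, `T ⪰ 0` are self-adjoint
    (hSf_sa : ∀ u v : X, ⟪Sf u, v⟫ = ⟪u, Sf v⟫)
    (hSg_sa : ∀ u v : Y, ⟪Sg u, v⟫ = ⟪u, Sg v⟫)
    (hT_sa : ∀ u v : Y, ⟪T u, v⟫ = ⟪u, T v⟫)
    (hSf_pd : ∀ x : X, x ≠ 0 → 0 < ⟪x, Sf x⟫)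
    (hSg_psd : ∀ y : Y, 0 ≤ ⟪y, Sg y⟫)
    (hT_psd : ∀ y : Y, 0 ≤ ⟪y, T y⟫)
    -- the subdifferential monotonicity conditions on `f` and `g`
    (hf_mono : ∀ (x₁ x₂ u₁ u₂ : X), IsSubgradAt f u₁ x₁ → IsSubgradAt f u₂ x₂ →
      ⟪x₁ - x₂, Sf (x₁ - x₂)⟫ ≤ ⟪u₁ - u₂, x₁ - x₂⟫)
    (hg_mono : ∀ (y₁ y₂ v₁ v₂ : Y), IsSubgradAt g v₁ y₁ → IsSubgradAt g v₂ y₂ →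
      ⟪y₁ - y₂, Sg (y₁ - y₂)⟫ ≤ ⟪v₁ - v₂, y₁ - y₂⟫)
    (β γ : ℝ) (hβ : 0 < β) (hγ : 0 < γ)
    (x : ℕ → X) (y : ℕ → Y) (z : ℕ → Z)
    -- the proximal AMA iterations
    (hx : ∀ (t : ℕ) (x' : X),
      f (x (t+1)) + ((-⟪z t, A (x (t+1))⟫ : ℝ) : EReal)
        ≤ f x' + ((-⟪z t, A x'⟫ : ℝ) : EReal))
    (hy : ∀ (t : ℕ) (y' : Y),
      g (y (t+1)) + ((-⟪z t, B (y (t+1))⟫ + β / 2 * ‖A (x (t+1)) + B (y (t+1)) - c‖ ^ 2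
          + 1 / 2 * ⟪y (t+1) - y t, T (y (t+1) - y t)⟫ : ℝ) : EReal)
        ≤ g y' + ((-⟪z t, B y'⟫ + β / 2 * ‖A (x (t+1)) + B y' - c‖ ^ 2
          + 1 / 2 * ⟪y' - y t, T (y' - y t)⟫ : ℝ) : EReal))
    (hz : ∀ t : ℕ, z (t+1) = z t - (γ * β) • (A (x (t+1)) + B (y (t+1)) - c))
    -- assumption A1 with an explicit triple `(x̄, ȳ, z̄)`
    (xb : X) (yb : Y) (zb : Z)
    (hA1f : IsSubgradAt f (ContinuousLinearMap.adjoint A zb) xb)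
    (hA1g : IsSubgradAt g (ContinuousLinearMap.adjoint B zb) yb)
    (hA1c : A xb + B yb - c = 0)
    (μ : ℝ) (hμ : 0 < μ) :
    ∀ (t : ℕ) (α : ℝ), 0 < α →
      (2 * ⟪x (t+1) - xb, Sf (x (t+1) - xb)⟫ - (β + μ) * ‖A (x (t+1) - xb)‖ ^ 2)
        + 2 * ⟪y (t+1) - yb, Sg (y (t+1) - yb)⟫
        + ⟪y (t+1) - y t, T (y (t+1) - y t)⟫
        + (β - α) * ‖B (y (t+1) - yb)‖ ^ 2
        + 1 / (γ ^ 2 * β) * (min α μ / (2 * β) + 1 - γ) * ‖z (t+1) - z t‖ ^ 2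
      ≤ (1 / (γ * β) * ‖z t - zb‖ ^ 2 + ⟪y t - yb, T (y t - yb)⟫)
        - (1 / (γ * β) * ‖z (t+1) - zb‖ ^ 2 + ⟪y (t+1) - yb, T (y (t+1) - yb)⟫) := by
  intro t α hα
  -- basic finiteness
  have hfxb : f xb ≠ ⊤ := by
    obtain ⟨u, hu⟩ := hf_proper
    intro h
    have h2 := hA1f u
    rw [h, EReal.top_add_coe, top_le_iff] at h2
    exact hu h2
  have hgyb : g yb ≠ ⊤ := by
    obtain ⟨u, hu⟩ := hg_proper
    intro h
    have h2 := hA1g u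
    rw [h, EReal.top_add_coe, top_le_iff] at h2
    exact hu h2
  have hfX : f (x (t+1)) ≠ ⊤ := ereal_ne_top (hx t xb) hfxb
  have hgY : g (y (t+1)) ≠ ⊤ := ereal_ne_top (hy t yb) hgyb
  -- subgradient from the x-step
  have sub1 : IsSubgradAt f (ContinuousLinearMap.adjoint A (z t)) (x (t+1)) := by
    intro u
    have h := ereal_shift (hf_ne_bot _) hfX (hf_ne_bot u) (hx t u)
    have e : (-⟪z t, A (x (t+1))⟫ - -⟪z t, A u⟫ : ℝ)
        = ⟪ContinuousLinearMap.adjoint A (z t), u - x (t+1)⟫ := by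
      rw [ContinuousLinearMap.adjoint_inner_left, map_sub, inner_sub_right]; ring
    rwa [e] at h
  -- abbreviations (opaque, to avoid defeq blowups)
  obtain ⟨rr, hrdef⟩ : ∃ r : Z, r = A (x (t+1)) + B (y (t+1)) - c := ⟨_, rfl⟩
  obtain ⟨vv, hvdef⟩ : ∃ v : Y,
      v = ContinuousLinearMap.adjoint B (z t - β • rr) - T (y (t+1) - y t) := ⟨_, rfl⟩
  -- subgradient from the y-step
  have sub2 : IsSubgradAt g vv (y (t+1)) := by
    intro u
    by_cases hu : g u = ⊤
    · rw [hu]; exact le_top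
    obtain ⟨gu, hgu⟩ : ∃ s : ℝ, g u = (s : EReal) :=
      ⟨_, (EReal.coe_toReal hu (hg_ne_bot u)).symm⟩
    obtain ⟨gY, hgY'⟩ : ∃ s : ℝ, g (y (t+1)) = (s : EReal) :=
      ⟨_, (EReal.coe_toReal hgY (hg_ne_bot _)).symm⟩
    obtain ⟨d, hd⟩ : ∃ d : Y, d = u - y (t+1) := ⟨_, rfl⟩
    obtain ⟨Q, hQdef⟩ : ∃ q : ℝ, q = β / 2 * ‖B d‖ ^ 2 + 1 / 2 * ⟪d, T d⟫ := ⟨_, rfl⟩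
    have hQ0 : 0 ≤ Q := by
      have h5 := hT_psd d
      rw [hQdef]; positivity
    have key : ∀ s : ℝ, 0 < s → s ≤ 1 → gY + ⟪vv, d⟫ ≤ gu + s * Q := by
      intro s hs hs1
      obtain ⟨w, hwdef⟩ : ∃ w : Y, w = s • u + (1 - s) • y (t+1) := ⟨_, rfl⟩
      have hgw_le : g w ≤ ((s * gu + (1 - s) * gY : ℝ) : EReal) := by
        have h := hg_cvx u (y (t+1)) s (1 - s) hs.le (by linarith) (by ring)
        rw [← hwdef, hgu, hgY'] at h
        calc g w ≤ (s : EReal) * gu + ((1 - s : ℝ) : EReal) * gY := h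
          _ = ((s * gu + (1 - s) * gY : ℝ) : EReal) := by
              rw [← EReal.coe_mul, ← EReal.coe_mul, ← EReal.coe_add]
      have hgwt : g w ≠ ⊤ := ne_top_of_le_ne_top (EReal.coe_ne_top _) hgw_le
      obtain ⟨gw, hgw⟩ : ∃ s : ℝ, g w = (s : EReal) :=
        ⟨_, (EReal.coe_toReal hgwt (hg_ne_bot w)).symm⟩
      have h2 : gw ≤ s * gu + (1 - s) * gY := by
        rw [hgw] at hgw_le; exact EReal.coe_le_coe_iff.mp hgw_le
      have h1 := hy t w
      rw [hgY', hgw, ← hrdef, ← EReal.coe_add, ← EReal.coe_add,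
        EReal.coe_le_coe_iff] at h1
      -- identities
      have hw1 : w = y (t+1) + s • d := by rw [hwdef, hd]; module
      have e1 : ⟪z t, B w⟫ = ⟪z t, B (y (t+1))⟫ + s * ⟪z t, B d⟫ := by
        rw [hw1, map_add, map_smul, inner_add_right, real_inner_smul_right]
      have e2 : ‖A (x (t+1)) + B w - c‖ ^ 2
          = ‖rr‖ ^ 2 + 2 * s * ⟪rr, B d⟫ + s ^ 2 * ‖B d‖ ^ 2 := by
        have h3 : A (x (t+1)) + B w - c = rr + s • B d := by
          rw [hw1, map_add, map_smul, hrdef]; abel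
        rw [h3, norm_add_sq_real, real_inner_smul_right, norm_smul, Real.norm_eq_abs,
          mul_pow, sq_abs]
        ring
      have e3 : ⟪w - y t, T (w - y t)⟫
          = ⟪y (t+1) - y t, T (y (t+1) - y t)⟫ + 2 * s * ⟪T (y (t+1) - y t), d⟫
            + s ^ 2 * ⟪d, T d⟫ := by
        have h3 : w - y t = (y (t+1) - y t) + s • d := by rw [hw1]; abel
        have c1 : ⟪y (t+1) - y t, T (s • d)⟫ = s * ⟪T (y (t+1) - y t), d⟫ := by
          rw [map_smul, real_inner_smul_right, hT_sa]
        have c2 : ⟪s • d, T (y (t+1) - y t)⟫ = s * ⟪T (y (t+1) - y t), d⟫ := by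
          rw [real_inner_smul_left, real_inner_comm]
        have c3 : ⟪s • d, T (s • d)⟫ = s ^ 2 * ⟪d, T d⟫ := by
          rw [map_smul, real_inner_smul_left, real_inner_smul_right]; ring
        rw [h3, map_add, inner_add_left, inner_add_right, inner_add_right, c1, c2, c3]
        ring
      have e4 : ⟪vv, d⟫ = ⟪z t, B d⟫ - β * ⟪rr, B d⟫ - ⟪T (y (t+1) - y t), d⟫ := by
        rw [hvdef, inner_sub_left, ContinuousLinearMap.adjoint_inner_left, inner_sub_left,
          real_inner_smul_left]
      rw [e1, e2, e3] at h1
      have hmain : s * (gY + ⟪vv, d⟫) ≤ s * (gu + s * Q) := by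
        rw [e4, hQdef]; nlinarith [h1, h2]
      exact le_of_mul_le_mul_left hmain hs
    -- take s → 0
    rw [hgY', hgu, ← hd, ← EReal.coe_add, EReal.coe_le_coe_iff]
    by_contra hcon
    push_neg at hcon
    have hε0 : 0 < gY + ⟪vv, d⟫ - gu := by linarith
    have hQ1 : (0:ℝ) < 2 * (Q + 1) := by linarith
    have hs0 : 0 < min 1 ((gY + ⟪vv, d⟫ - gu) / (2 * (Q + 1))) :=
      lt_min one_pos (div_pos hε0 hQ1)
    have hk := key _ hs0 (min_le_left _ _)
    have hb1 : min 1 ((gY + ⟪vv, d⟫ - gu) / (2 * (Q + 1))) * Q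
        ≤ (gY + ⟪vv, d⟫ - gu) / (2 * (Q + 1)) * Q :=
      mul_le_mul_of_nonneg_right (min_le_right _ _) hQ0
    have hb2 : (gY + ⟪vv, d⟫ - gu) / (2 * (Q + 1)) * Q < gY + ⟪vv, d⟫ - gu := by
      rw [div_mul_eq_mul_div, div_lt_iff₀ hQ1]
      nlinarith
    linarith
  -- monotonicity inequalities
  have hr : rr = A (x (t+1) - xb) + B (y (t+1) - yb) := by
    rw [hrdef, map_sub, map_sub]
    have h0 : A xb + B yb = c := by
      have := hA1c; rw [sub_eq_zero] at this; exact this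
    rw [← h0]; abel
  have I1 : ⟪x (t+1) - xb, Sf (x (t+1) - xb)⟫ ≤ ⟪z t - zb, A (x (t+1) - xb)⟫ := by
    have h := hf_mono (x (t+1)) xb _ _ sub1 hA1f
    rwa [← map_sub, ContinuousLinearMap.adjoint_inner_left] at h
  have I2 : ⟪y (t+1) - yb, Sg (y (t+1) - yb)⟫ ≤ ⟪z t - zb, B (y (t+1) - yb)⟫
      - β * (⟪A (x (t+1) - xb), B (y (t+1) - yb)⟫ + ‖B (y (t+1) - yb)‖ ^ 2)
      - ⟪T (y (t+1) - y t), y (t+1) - yb⟫ := by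
    have h := hg_mono (y (t+1)) yb _ _ sub2 hA1g
    have e : ⟪vv - ContinuousLinearMap.adjoint B zb, y (t+1) - yb⟫
        = ⟪z t - zb, B (y (t+1) - yb)⟫
          - β * (⟪A (x (t+1) - xb), B (y (t+1) - yb)⟫ + ‖B (y (t+1) - yb)‖ ^ 2)
          - ⟪T (y (t+1) - y t), y (t+1) - yb⟫ := by
      have h4 : ⟪rr, B (y (t+1) - yb)⟫
          = ⟪A (x (t+1) - xb), B (y (t+1) - yb)⟫ + ‖B (y (t+1) - yb)‖ ^ 2 := by
        rw [hr, inner_add_left, real_inner_self_eq_norm_sq]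
      rw [hvdef, inner_sub_left, inner_sub_left, ContinuousLinearMap.adjoint_inner_left,
        ContinuousLinearMap.adjoint_inner_left, inner_sub_left, inner_sub_left,
        real_inner_smul_left, h4]
      ring
    rw [e] at h; exact h
  -- norm identities
  have hzt := hz t
  rw [← hrdef] at hzt
  have hz2 : ‖z (t+1) - z t‖ ^ 2
      = (γ * β) ^ 2 * (‖A (x (t+1) - xb)‖ ^ 2
        + 2 * ⟪A (x (t+1) - xb), B (y (t+1) - yb)⟫ + ‖B (y (t+1) - yb)‖ ^ 2) := by
    have h3 : z (t+1) - z t = -((γ * β) • rr) := by rw [hzt]; abel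
    rw [h3, norm_neg, norm_smul, Real.norm_eq_abs, mul_pow, sq_abs, hr, norm_add_sq_real]
  have hz1 : ‖z (t+1) - zb‖ ^ 2
      = ‖z t - zb‖ ^ 2 - 2 * (γ * β) * (⟪z t - zb, A (x (t+1) - xb)⟫
          + ⟪z t - zb, B (y (t+1) - yb)⟫)
        + (γ * β) ^ 2 * (‖A (x (t+1) - xb)‖ ^ 2
          + 2 * ⟪A (x (t+1) - xb), B (y (t+1) - yb)⟫ + ‖B (y (t+1) - yb)‖ ^ 2) := by
    have h3 : z (t+1) - zb = (z t - zb) - (γ * β) • rr := by rw [hzt]; abel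
    have h4 : ⟪z t - zb, rr⟫ = ⟪z t - zb, A (x (t+1) - xb)⟫
        + ⟪z t - zb, B (y (t+1) - yb)⟫ := by
      rw [hr, inner_add_right]
    rw [h3, norm_sub_sq_real, real_inner_smul_right, h4, norm_smul, Real.norm_eq_abs,
      mul_pow, sq_abs, hr, norm_add_sq_real]
    ring
  have hT1 : ⟪y t - yb, T (y t - yb)⟫
      = ⟪y (t+1) - yb, T (y (t+1) - yb)⟫ - 2 * ⟪T (y (t+1) - y t), y (t+1) - yb⟫
        + ⟪y (t+1) - y t, T (y (t+1) - y t)⟫ := by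
    have h0 : y t - yb = (y (t+1) - yb) - (y (t+1) - y t) := by abel
    have c1 : ⟪y (t+1) - yb, T (y (t+1) - y t)⟫
        = ⟪T (y (t+1) - y t), y (t+1) - yb⟫ := real_inner_comm _ _
    have c2 : ⟪y (t+1) - y t, T (y (t+1) - yb)⟫
        = ⟪T (y (t+1) - y t), y (t+1) - yb⟫ := by
      rw [← hT_sa]
    rw [h0, map_sub, inner_sub_left, inner_sub_right, inner_sub_right, c1, c2]
    ring
  have hcs : 2 * ⟪A (x (t+1) - xb), B (y (t+1) - yb)⟫
      ≤ ‖A (x (t+1) - xb)‖ ^ 2 + ‖B (y (t+1) - yb)‖ ^ 2 := by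
    nlinarith [norm_sub_sq_real (A (x (t+1) - xb)) (B (y (t+1) - yb)),
      sq_nonneg ‖A (x (t+1) - xb) - B (y (t+1) - yb)‖]
  have hm1 : min α μ ≤ α := min_le_left _ _
  have hm2 : min α μ ≤ μ := min_le_right _ _
  have hm0 : 0 < min α μ := lt_min hα hμ
  rw [hz1, hz2, hT1]
  have final := scalar_key β γ μ α (min α μ)
    ⟪x (t+1) - xb, Sf (x (t+1) - xb)⟫ ⟪y (t+1) - yb, Sg (y (t+1) - yb)⟫
    ⟪A (x (t+1) - xb), B (y (t+1) - yb)⟫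
    (‖A (x (t+1) - xb)‖ ^ 2) (‖B (y (t+1) - yb)‖ ^ 2)
    ⟪z t - zb, A (x (t+1) - xb)⟫ ⟪z t - zb, B (y (t+1) - yb)⟫
    ⟪y (t+1) - y t, T (y (t+1) - y t)⟫ ⟪T (y (t+1) - y t), y (t+1) - yb⟫
    ⟪y (t+1) - yb, T (y (t+1) - yb)⟫ (‖z t - zb‖ ^ 2)
    hβ hγ hm1 hm2 hm0 (sq_nonneg _) (sq_nonneg _) I1 I2 hcs
  linarith [final]
end

section
/- Let {(x^t, y^t, z^t)} be generated by the proximal AMA, suppose assumption A1 holds, and suppose β>0, T ⪰ 0 and γ>0 are chosen so that (i) Σ_g + T + βB*B ≻ 0 and (ii) for some positive μ, δ, σ one has 2Σ_f − (β+μ)A*A ⪰ δI and γ + σ ≤ 1 + min{β,μ}/(2β). Let (x̄, ȳ, z̄) be the limit of {(x^t, y^t, z^t)} and define (x̄^N, ȳ^N) = (1/N)Σ_{t=1}^N (x^t, y^t). Then f(x̄^N) + g(ȳ^N) − f(x̄) − g(ȳ) ≤ (1/(2N))((1/(γβ))‖z⁰‖² + ‖y⁰ − ȳ‖²_T) + (1/N)·(β‖A‖²/(2δ)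 + max{γ−1, 0}/(2σ))·((1/(γβ))‖z⁰ − z̄‖² + ‖y⁰ − ȳ‖²_T). -/
open RealInnerProductSpace Filter Topology

lemma ereal_exists_coe {E : EReal} (h : E ≠ ⊥) {r : ℝ} (hle : E ≤ (r : EReal)) :
    ∃ s : ℝ, E = (s : EReal) ∧ s ≤ r := by
  have ht : E ≠ ⊤ := (lt_of_le_of_lt hle (EReal.coe_lt_top r)).ne
  refine ⟨E.toReal, (EReal.coe_toReal ht h).symm, ?_⟩
  rw [(EReal.coe_toReal ht h).symm] at hle; exact_mod_cast hle

lemma ereal_ne_top_of_add_le {E F : EReal} {c₁ c₂ : ℝ} (hF : F ≠ ⊤)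
    (h : E + (c₁ : EReal) ≤ F + (c₂ : EReal)) : E ≠ ⊤ := by
  intro hE
  rw [hE, EReal.top_add_coe] at h
  exact (EReal.add_lt_top hF (EReal.coe_ne_top c₂)).ne (top_le_iff.mp h)

lemma subgrad_real {E : Type*} [NormedAddCommGroup E] [InnerProductSpace ℝ E]
    {f : E → EReal} {v xm u : E} {a b : ℝ} (h : IsSubgradAt f v xm)
    (ha : f xm = (a : EReal)) (hb : f u = (b : EReal)) : a + ⟪v, u - xm⟫ ≤ b := by
  have := h u
  rw [ha, hb, ← EReal.coe_add, EReal.coe_le_coe_iff] at this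
  exact this

/-- If `ym` minimizes `g + q` where `q` has linearization `⟪G, ·⟫` at `ym` with
nonnegative curvature `R`, then `-G` is a subgradient of `g` at `ym`. -/
lemma isSubgradAt_of_min {E : Type*} [NormedAddCommGroup E] [InnerProductSpace ℝ E]
    (g : E → EReal) (hg_ne_bot : ∀ u, g u ≠ ⊥)
    (hg_cvx : ∀ (x₁ x₂ : E) (a b : ℝ), 0 ≤ a → 0 ≤ b → a + b = 1 →
      g (a • x₁ + b • x₂) ≤ (a : EReal) * g x₁ + (b : EReal) * g x₂)
    (ym : E) (gm : ℝ) (hgm : g ym = (gm : EReal))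
    (q : E → ℝ) (G : E) (R : E → ℝ) (hR : ∀ d, 0 ≤ R d)
    (hq : ∀ (d : E) (s : ℝ), q (ym + s • d) = q ym + s * ⟪G, d⟫ + s^2 * R d)
    (hmin : ∀ y', g ym + ((q ym : ℝ) : EReal) ≤ g y' + ((q y' : ℝ) : EReal)) :
    IsSubgradAt g (-G) ym := by
  intro u
  rcases eq_or_ne (g u) ⊤ with hu | hu
  · rw [hu]; exact le_top
  obtain ⟨gu, hgu⟩ : ∃ gu : ℝ, g u = (gu : EReal) :=
    ⟨(g u).toReal, (EReal.coe_toReal hu (hg_ne_bot u)).symm⟩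
  rw [hgm, hgu, inner_neg_left, ← EReal.coe_add, EReal.coe_le_coe_iff]
  by_contra hlt
  push_neg at hlt
  set d := u - ym with hd
  set ε := gm - ⟪G, d⟫ - gu with hε
  have hε0 : 0 < ε := by simp only [hε]; linarith
  set Rd := R d with hRd
  have hRd0 : 0 ≤ Rd := hR d
  set s := min 1 (ε / (2 * Rd + 1)) with hs
  have hs0 : 0 < s := lt_min one_pos (by positivity)
  have hs1 : s ≤ 1 := min_le_left _ _
  have hcomb := hg_cvx ym u (1 - s) s (by linarith) hs0.le (by ring)
  have heq : (1 - s) • ym + s • u = ym + s • d := by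
    simp only [hd]; module
  rw [heq, hgm, hgu, ← EReal.coe_mul, ← EReal.coe_mul, ← EReal.coe_add] at hcomb
  obtain ⟨gθ, hgθ, hgθle⟩ := ereal_exists_coe (hg_ne_bot _) hcomb
  have hmin' := hmin (ym + s • d)
  rw [hgm, hgθ, hq d s, ← EReal.coe_add, ← EReal.coe_add, EReal.coe_le_coe_iff] at hmin'
  have h1 : s * ε ≤ s^2 * Rd := by simp only [hε]; nlinarith
  have h2 : ε ≤ s * Rd := by nlinarith
  have h3 : s * (2 * Rd + 1) ≤ ε := by
    have h4 : s ≤ ε / (2 * Rd + 1) := min_le_right _ _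
    rw [le_div_iff₀ (by positivity)] at h4; linarith
  nlinarith

lemma T_polar {Y : Type*} [NormedAddCommGroup Y] [InnerProductSpace ℝ Y]
    (T : Y →L[ℝ] Y) (hT_sa : ∀ u v : Y, ⟪T u, v⟫ = ⟪u, T v⟫) (a b : Y) :
    2*⟪T a, b⟫ = ⟪b, T b⟫ - ⟪b - a, T (b - a)⟫ + ⟪a, T a⟫ := by
  simp only [map_sub, inner_sub_left, inner_sub_right]
  have h1 : ⟪b, T a⟫ = ⟪T a, b⟫ := real_inner_comm _ _
  have h2 : ⟪a, T b⟫ = ⟪T a, b⟫ := by rw [← hT_sa]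
  rw [h1, h2]
  ring

lemma jensen_avg {E : Type*} [NormedAddCommGroup E] [Module ℝ E]
    (f : E → EReal) (hbot : ∀ u, f u ≠ ⊥)
    (hcvx : ∀ (x₁ x₂ : E) (a b : ℝ), 0 ≤ a → 0 ≤ b → a + b = 1 →
      f (a • x₁ + b • x₂) ≤ (a : EReal) * f x₁ + (b : EReal) * f x₂)
    (x : ℕ → E) (φ : ℕ → ℝ) :
    ∀ N : ℕ, 1 ≤ N → (∀ t ∈ Finset.Icc 1 N, f (x t) ≤ ((φ t : ℝ) : EReal)) →
      f ((N : ℝ)⁻¹ • ∑ t ∈ Finset.Icc 1 N, x t)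
        ≤ (((N : ℝ)⁻¹ * ∑ t ∈ Finset.Icc 1 N, φ t : ℝ) : EReal) := by
  intro N
  induction N with
  | zero => omega
  | succ N ih =>
    intro _ hbd
    rcases Nat.eq_or_lt_of_le (Nat.one_le_iff_ne_zero.mpr (Nat.succ_ne_zero N)) with h1 | h1
    · have hN0 : N = 0 := by omega
      subst hN0
      have := hbd 1 (by simp)
      simpa using this
    · have hN1 : 1 ≤ N := by omega
      have hbd' : ∀ t ∈ Finset.Icc 1 N, f (x t) ≤ ((φ t : ℝ) : EReal) := by
        intro t ht
        obtain ⟨h1t, h2t⟩ := Finset.mem_Icc.mp ht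
        exact hbd t (Finset.mem_Icc.mpr ⟨h1t, by omega⟩)
      have ihN := ih hN1 hbd'
      obtain ⟨r, hr, hrle⟩ := ereal_exists_coe (hbot _) ihN
      have hNpos : (0:ℝ) < N := by exact_mod_cast hN1
      set a : ℝ := N / (N + 1) with ha
      set b : ℝ := 1 / (N + 1) with hb
      have hsum : ∑ t ∈ Finset.Icc 1 (N+1), x t = (∑ t ∈ Finset.Icc 1 N, x t) + x (N+1) :=
        Finset.sum_Icc_succ_top (by omega) x
      have heq : ((N+1 : ℕ) : ℝ)⁻¹ • ∑ t ∈ Finset.Icc 1 (N+1), x t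
          = a • ((N : ℝ)⁻¹ • ∑ t ∈ Finset.Icc 1 N, x t) + b • x (N+1) := by
        rw [hsum, smul_add, smul_smul]
        push_cast
        congr 2
        · rw [ha]; field_simp
        · rw [hb]; norm_num
      rw [heq]
      have hab : a + b = 1 := by rw [ha, hb]; field_simp
      have hcv := hcvx ((N : ℝ)⁻¹ • ∑ t ∈ Finset.Icc 1 N, x t) (x (N+1)) a b
        (by positivity) (by positivity) hab
      refine le_trans hcv ?_
      rw [hr]
      calc (a : EReal) * (r : EReal) + (b : EReal) * f (x (N+1))
          ≤ (a : EReal) * (r : EReal) + (b : EReal) * ((φ (N+1) : ℝ) : EReal) := by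
            gcongr
            · exact hbd (N+1) (by simp)
        _ = (((a * r + b * φ (N+1) : ℝ)) : EReal) := by
            rw [← EReal.coe_mul, ← EReal.coe_mul, ← EReal.coe_add]
        _ ≤ _ := by
            rw [EReal.coe_le_coe_iff]
            rw [Finset.sum_Icc_succ_top (by omega : 1 ≤ N+1) φ]
            push_cast
            have h2 : a * r ≤ a * ((N:ℝ)⁻¹ * ∑ t ∈ Finset.Icc 1 N, φ t) :=
              mul_le_mul_of_nonneg_left hrle (by positivity)
            have h3 : a * ((N:ℝ)⁻¹ * ∑ t ∈ Finset.Icc 1 N, φ t)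
                = ((N:ℝ)+1)⁻¹ * ∑ t ∈ Finset.Icc 1 N, φ t := by
              rw [ha]; field_simp
            rw [h3] at h2
            have h4 : ((N:ℝ)+1)⁻¹ * (∑ t ∈ Finset.Icc 1 N, φ t + φ (N+1))
                = ((N:ℝ)+1)⁻¹ * ∑ t ∈ Finset.Icc 1 N, φ t + b * φ (N+1) := by
              rw [hb]; ring
            rw [h4]
            linarith


set_option maxHeartbeats 1000000 in
/-- **Iteration complexity of the proximal AMA: upper objective bound (Theorem 3.2,
upper bound in (fvalbd)).** For the ergodic averages
`(x̄^N, ȳ^N) = (1/N)Σ_{t=1}^N (x^t, y^t)` one has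
`f(x̄^N) + g(ȳ^N) − f(x̄) − g(ȳ)
  ≤ (1/(2N))((1/(γβ))‖z⁰‖² + ‖y⁰ − ȳ‖²_T)
    + (1/N)(β‖A‖²/(2δ) + max{γ−1,0}/(2σ))((1/(γβ))‖z⁰ − z̄‖² + ‖y⁰ − ȳ‖²_T)`. -/
theorem stmt_4
    {X Y Z : Type*}
    [NormedAddCommGroup X] [InnerProductSpace ℝ X] [FiniteDimensional ℝ X]
    [NormedAddCommGroup Y] [InnerProductSpace ℝ Y] [FiniteDimensional ℝ Y]
    [NormedAddCommGroup Z] [InnerProductSpace ℝ Z] [FiniteDimensional ℝ Z]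
    (f : X → EReal) (g : Y → EReal)
    -- `f` and `g` are proper
    (hf_ne_bot : ∀ x, f x ≠ ⊥) (hf_proper : ∃ x, f x ≠ ⊤)
    (hg_ne_bot : ∀ y, g y ≠ ⊥) (hg_proper : ∃ y, g y ≠ ⊤)
    -- `f` and `g` are closed
    (hf_lsc : LowerSemicontinuous f) (hg_lsc : LowerSemicontinuous g)
    -- `f` and `g` are convex
    (hf_cvx : ∀ (x₁ x₂ : X) (a b : ℝ), 0 ≤ a → 0 ≤ b → a + b = 1 →
      f (a • x₁ + b • x₂) ≤ (a : EReal) * f x₁ + (b : EReal) * f x₂)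
    (hg_cvx : ∀ (y₁ y₂ : Y) (a b : ℝ), 0 ≤ a → 0 ≤ b → a + b = 1 →
      g (a • y₁ + b • y₂) ≤ (a : EReal) * g y₁ + (b : EReal) * g y₂)
    (A : X →L[ℝ] Z) (B : Y →L[ℝ] Z) (c : Z)
    (Sf : X →L[ℝ] X) (Sg : Y →L[ℝ] Y) (T : Y →L[ℝ] Y)
    -- `Sf ≻ 0`, `Sg ⪰ 0`, `T ⪰ 0` are self-adjoint
    (hSf_sa : ∀ u v : X, ⟪Sf u, v⟫ = ⟪u, Sf v⟫)
    (hSg_sa : ∀ u v : Y, ⟪Sg u, v⟫ = ⟪u, Sg v⟫)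
    (hT_sa : ∀ u v : Y, ⟪T u, v⟫ = ⟪u, T v⟫)
    (hSf_pd : ∀ x : X, x ≠ 0 → 0 < ⟪x, Sf x⟫)
    (hSg_psd : ∀ y : Y, 0 ≤ ⟪y, Sg y⟫)
    (hT_psd : ∀ y : Y, 0 ≤ ⟪y, T y⟫)
    -- the subdifferential monotonicity conditions on `f` and `g`
    (hf_mono : ∀ (x₁ x₂ u₁ u₂ : X), IsSubgradAt f u₁ x₁ → IsSubgradAt f u₂ x₂ →
      ⟪x₁ - x₂, Sf (x₁ - x₂)⟫ ≤ ⟪u₁ - u₂, x₁ - x₂⟫)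
    (hg_mono : ∀ (y₁ y₂ v₁ v₂ : Y), IsSubgradAt g v₁ y₁ → IsSubgradAt g v₂ y₂ →
      ⟪y₁ - y₂, Sg (y₁ - y₂)⟫ ≤ ⟪v₁ - v₂, y₁ - y₂⟫)
    (β γ : ℝ) (hβ : 0 < β) (hγ : 0 < γ)
    (x : ℕ → X) (y : ℕ → Y) (z : ℕ → Z)
    -- the proximal AMA iterations
    (hx : ∀ (t : ℕ) (x' : X),
      f (x (t+1)) + ((-⟪z t, A (x (t+1))⟫ : ℝ) : EReal)
        ≤ f x' + ((-⟪z t, A x'⟫ : ℝ) : EReal))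
    (hy : ∀ (t : ℕ) (y' : Y),
      g (y (t+1)) + ((-⟪z t, B (y (t+1))⟫ + β / 2 * ‖A (x (t+1)) + B (y (t+1)) - c‖ ^ 2
          + 1 / 2 * ⟪y (t+1) - y t, T (y (t+1) - y t)⟫ : ℝ) : EReal)
        ≤ g y' + ((-⟪z t, B y'⟫ + β / 2 * ‖A (x (t+1)) + B y' - c‖ ^ 2
          + 1 / 2 * ⟪y' - y t, T (y' - y t)⟫ : ℝ) : EReal))
    (hz : ∀ t : ℕ, z (t+1) = z t - (γ * β) • (A (x (t+1)) + B (y (t+1)) - c))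
    -- assumption A1
    (hA1 : ∃ (x1 : X) (y1 : Y) (z1 : Z),
      IsSubgradAt f (ContinuousLinearMap.adjoint A z1) x1 ∧
      IsSubgradAt g (ContinuousLinearMap.adjoint B z1) y1 ∧
      A x1 + B y1 - c = 0)
    -- condition (i): `Σg + T + βB*B ≻ 0`
    (hcond1 : ∀ w : Y, w ≠ 0 → 0 < ⟪w, Sg w⟫ + ⟪w, T w⟫ + β * ‖B w‖ ^ 2)
    (μ δ σ : ℝ) (hμ : 0 < μ) (hδ : 0 < δ) (hσ : 0 < σ)
    -- condition (ii): `2Σf − (β+μ)A*A ⪰ δI` and `γ + σ ≤ 1 + min{β,μ}/(2β)`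
    (hcond2 : ∀ w : X, δ * ‖w‖ ^ 2 ≤ 2 * ⟪w, Sf w⟫ - (β + μ) * ‖A w‖ ^ 2)
    (hcond3 : γ + σ ≤ 1 + min β μ / (2 * β))
    -- `(x̄, ȳ, z̄)` is the limit of the iterates guaranteed by the convergence theorem
    (xb : X) (yb : Y) (zb : Z)
    (hlimx : Tendsto x atTop (𝓝 xb)) (hlimy : Tendsto y atTop (𝓝 yb))
    (hlimz : Tendsto z atTop (𝓝 zb))
    (hA1f : IsSubgradAt f (ContinuousLinearMap.adjoint A zb) xb)
    (hA1g : IsSubgradAt g (ContinuousLinearMap.adjoint B zb) yb)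
    (hA1c : A xb + B yb - c = 0) :
    ∀ N : ℕ, 1 ≤ N →
      f ((N : ℝ)⁻¹ • ∑ t ∈ Finset.Icc 1 N, x t)
          + g ((N : ℝ)⁻¹ • ∑ t ∈ Finset.Icc 1 N, y t)
        ≤ f xb + g yb +
          ((1 / (2 * N) * (1 / (γ * β) * ‖z 0‖ ^ 2 + ⟪y 0 - yb, T (y 0 - yb)⟫)
            + 1 / N * (β * ‖A‖ ^ 2 / (2 * δ) + max (γ - 1) 0 / (2 * σ))
              * (1 / (γ * β) * ‖z 0 - zb‖ ^ 2 + ⟪y 0 - yb, T (y 0 - yb)⟫) : ℝ) : EReal) := by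
  intro N hN
  have hγβ : 0 < γ * β := mul_pos hγ hβ
  -- finiteness of the limit values
  obtain ⟨u₀, hu₀⟩ := hf_proper
  have hfxb_ne_top : f xb ≠ ⊤ := by
    intro h
    have h2 := hA1f u₀
    rw [h, EReal.top_add_coe] at h2
    exact hu₀ (top_le_iff.mp h2)
  obtain ⟨w₀, hw₀⟩ := hg_proper
  have hgyb_ne_top : g yb ≠ ⊤ := by
    intro h
    have h2 := hA1g w₀
    rw [h, EReal.top_add_coe] at h2
    exact hw₀ (top_le_iff.mp h2)
  set fb : ℝ := (f xb).toReal with hfb_def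
  have hfb : f xb = (fb : EReal) := (EReal.coe_toReal hfxb_ne_top (hf_ne_bot xb)).symm
  set gb : ℝ := (g yb).toReal with hgb_def
  have hgb : g yb = (gb : EReal) := (EReal.coe_toReal hgyb_ne_top (hg_ne_bot yb)).symm
  -- the residual and the y-step subgradient vector
  set e : ℕ → Z := fun t => A (x (t+1)) + B (y (t+1)) - c with he_def
  have hc : A xb + B yb = c := sub_eq_zero.mp hA1c
  -- finiteness along iterates
  have hfx_ne_top : ∀ t : ℕ, f (x (t+1)) ≠ ⊤ := by
    intro t
    have h := hx t xb
    rw [hfb] at h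
    exact ereal_ne_top_of_add_le (EReal.coe_ne_top fb) h
  have hgy_ne_top : ∀ t : ℕ, g (y (t+1)) ≠ ⊤ := by
    intro t
    have h := hy t yb
    rw [hgb] at h
    exact ereal_ne_top_of_add_le (EReal.coe_ne_top gb) h
  set fx : ℕ → ℝ := fun t => (f (x t)).toReal with hfx_def
  set gy : ℕ → ℝ := fun t => (g (y t)).toReal with hgy_def
  have hfm : ∀ t : ℕ, f (x (t+1)) = ((fx (t+1) : ℝ) : EReal) := fun t =>
    (EReal.coe_toReal (hfx_ne_top t) (hf_ne_bot _)).symm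
  have hgm : ∀ t : ℕ, g (y (t+1)) = ((gy (t+1) : ℝ) : EReal) := fun t =>
    (EReal.coe_toReal (hgy_ne_top t) (hg_ne_bot _)).symm
  -- the x-step subgradient
  have hsubf : ∀ t : ℕ, IsSubgradAt f (ContinuousLinearMap.adjoint A (z t)) (x (t+1)) := by
    intro t
    have key := isSubgradAt_of_min f hf_ne_bot hf_cvx (x (t+1)) (fx (t+1)) (hfm t)
      (fun x' => -⟪z t, A x'⟫) (-(ContinuousLinearMap.adjoint A (z t))) (fun _ => (0:ℝ))
      (fun _ => le_refl 0)
      (by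
        intro d s
        simp only [map_add, map_smul, inner_add_right, real_inner_smul_right, inner_neg_left,
          ContinuousLinearMap.adjoint_inner_left]
        ring)
      (hx t)
    rwa [neg_neg] at key
  -- the y-step subgradient
  set v : ℕ → Y := fun t => ContinuousLinearMap.adjoint B (z t)
      - β • ContinuousLinearMap.adjoint B (e t) - T (y (t+1) - y t) with hv_def
  have hsubg : ∀ t : ℕ, IsSubgradAt g (v t) (y (t+1)) := by
    intro t
    have key := isSubgradAt_of_min g hg_ne_bot hg_cvx (y (t+1)) (gy (t+1)) (hgm t)
      (fun y' => -⟪z t, B y'⟫ + β / 2 * ‖A (x (t+1)) + B y' - c‖ ^ 2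
          + 1 / 2 * ⟪y' - y t, T (y' - y t)⟫)
      (β • ContinuousLinearMap.adjoint B (e t) - ContinuousLinearMap.adjoint B (z t)
          + T (y (t+1) - y t))
      (fun d => β / 2 * ‖B d‖ ^ 2 + 1 / 2 * ⟪d, T d⟫)
      (fun d => add_nonneg (by positivity) (mul_nonneg (by norm_num) (hT_psd d)))
      (by
        intro d s
        have h1 : A (x (t+1)) + B (y (t+1) + s • d) - c = e t + s • B d := by
          simp only [map_add, map_smul, he_def]; module
        have h2 : y (t+1) + s • d - y t = (y (t+1) - y t) + s • d := by module
        simp only [h1, h2]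
        rw [norm_add_sq_real]
        simp only [inner_add_left, inner_add_right, real_inner_smul_left, real_inner_smul_right,
          inner_sub_left, inner_sub_right, inner_neg_left, map_add, map_smul,
          ContinuousLinearMap.adjoint_inner_left, norm_smul, mul_pow, sq_abs,
          Real.norm_eq_abs]
        have hA : (⟪y (t+1), T d⟫ : ℝ) - ⟪y t, T d⟫ = ⟪d, T (y (t+1) - y t)⟫ := by
          rw [← inner_sub_left, ← hT_sa (y (t+1) - y t) d]
          exact real_inner_comm _ _
        linear_combination (s/2) * hA - s * real_inner_comm d (T (y (t+1) - y t)))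
      (hy t)
    have hveq : v t = -(β • ContinuousLinearMap.adjoint B (e t)
        - ContinuousLinearMap.adjoint B (z t) + T (y (t+1) - y t)) := by
      rw [hv_def]; module
    rwa [← hveq] at key
  -- scalar constants for the Young inequality
  set m : ℝ := min β μ / (2 * β) with hm_def
  have hm0 : 0 < m := div_pos (lt_min hβ hμ) (by linarith)
  have hm12 : m ≤ 1/2 := by
    rw [hm_def, div_le_iff₀ (by linarith : (0:ℝ) < 2*β)]
    have := min_le_left β μ; linarith
  have h1m : 0 < 1 - m := by linarith
  set t₀ : ℝ := (1 - m)⁻¹ with ht0_def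
  have ht0pos : 0 < t₀ := inv_pos.mpr h1m
  have ht0m : t₀ * (1 - m) = 1 := inv_mul_cancel₀ (ne_of_gt h1m)
  have hscal1 : β * t₀ ≤ β + μ := by
    rcases le_total β μ with h | h
    · have hmv : m = 1/2 := by rw [hm_def, min_eq_left h]; field_simp
      have ht2 : t₀ = 2 := by rw [ht0_def, hmv]; norm_num
      rw [ht2]; linarith
    · have hmv : m = μ / (2*β) := by rw [hm_def, min_eq_right h]
      have h2βμ : 0 < 2*β - μ := by linarith
      have ht2 : t₀ = 2*β/(2*β - μ) := by
        rw [ht0_def, hmv]; rw [show 1 - μ/(2*β) = (2*β - μ)/(2*β) by field_simp]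
        rw [inv_div]
      rw [ht2]
      rw [show β * (2*β/(2*β-μ)) = 2*β^2/(2*β-μ) by ring]
      rw [div_le_iff₀ h2βμ]; nlinarith
  have hscal2 : 1 ≤ t₀ * (2 - γ - σ) := by
    have h1 : 1 - m ≤ 2 - γ - σ := by linarith [hcond3]
    calc (1:ℝ) = t₀ * (1 - m) := ht0m.symm
    _ ≤ t₀ * (2 - γ - σ) := mul_le_mul_of_nonneg_left h1 ht0pos.le
  -- real-valued sequences
  set Dz : ℕ → ℝ := fun t => ‖z t - zb‖^2 with hDz_def
  set Nz : ℕ → ℝ := fun t => ‖z t‖^2 with hNz_def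
  set Qy : ℕ → ℝ := fun t => ⟪y t - yb, T (y t - yb)⟫ with hQ_def
  set Ex : ℕ → ℝ := fun t => ‖e t‖^2 with hEx_def
  set Dx : ℕ → ℝ := fun t => ‖x (t+1) - xb‖^2 with hDx_def
  have hQpos : ∀ t, 0 ≤ Qy t := fun t => hT_psd _
  have hExpos : ∀ t, 0 ≤ Ex t := fun t => sq_nonneg _
  have hDxpos : ∀ t, 0 ≤ Dx t := fun t => sq_nonneg _
  have hNzpos : ∀ t, 0 ≤ Nz t := fun t => sq_nonneg _
  have hDzpos : ∀ t, 0 ≤ Dz t := fun t => sq_nonneg _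
  -- basic vector identities
  have hAc : ∀ t : ℕ, A (x (t+1)) - A xb + (B (y (t+1)) - B yb) = e t := by
    intro t
    show _ = A (x (t+1)) + B (y (t+1)) - c
    rw [← hc]; abel
  -- splitting of inner products against the residual
  have hsplit : ∀ (t : ℕ) (w : Z), (⟪w, A (x (t+1))⟫ - ⟪w, A xb⟫)
      + (⟪w, B (y (t+1))⟫ - ⟪w, B yb⟫) = ⟪w, e t⟫ := by
    intro t w
    rw [← inner_sub_right, ← inner_sub_right, ← inner_add_right, hAc t]
  have hED : ∀ t : ℕ, ⟪e t, B (y (t+1))⟫ - ⟪e t, B yb⟫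
      = Ex t - (⟪e t, A (x (t+1))⟫ - ⟪e t, A xb⟫) := by
    intro t
    have h1 : B (y (t+1)) - B yb = e t - (A (x (t+1)) - A xb) := by rw [← hAc t]; abel
    rw [← inner_sub_right, h1, inner_sub_right, real_inner_self_eq_norm_sq, inner_sub_right]
  -- dual update identities
  have hzeq : ∀ t : ℕ, z (t+1) = z t - (γ*β) • e t := hz
  have hzz : ∀ t : ℕ, 2*(γ*β)*⟪z t, e t⟫ = Nz t - Nz (t+1) + (γ*β)^2 * Ex t := by
    intro t
    have h2 : Nz (t+1) = ‖z t - (γ*β) • e t‖^2 := by rw [← hzeq t]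
    rw [norm_sub_sq_real] at h2
    have h3 : ‖(γ*β) • e t‖^2 = (γ*β)^2 * Ex t := by
      rw [norm_smul, mul_pow, Real.norm_eq_abs, sq_abs]
    have h4 : ⟪z t, (γ*β) • e t⟫ = (γ*β) * ⟪z t, e t⟫ := real_inner_smul_right _ _ _
    rw [h3, h4] at h2
    have h5 : Nz t = ‖z t‖^2 := rfl
    linarith [h2]
  have hzzb : ∀ t : ℕ, 2*(γ*β)*⟪z t - zb, e t⟫ = Dz t - Dz (t+1) + (γ*β)^2 * Ex t := by
    intro t
    have h1 : z (t+1) - zb = (z t - zb) - (γ*β) • e t := by rw [hzeq t]; abel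
    have h2 : Dz (t+1) = ‖(z t - zb) - (γ*β) • e t‖^2 := by rw [← h1]
    rw [norm_sub_sq_real] at h2
    have h3 : ‖(γ*β) • e t‖^2 = (γ*β)^2 * Ex t := by
      rw [norm_smul, mul_pow, Real.norm_eq_abs, sq_abs]
    have h4 : ⟪z t - zb, (γ*β) • e t⟫ = (γ*β) * ⟪z t - zb, e t⟫ := real_inner_smul_right _ _ _
    rw [h3, h4] at h2
    have h5 : Dz t = ‖z t - zb‖^2 := rfl
    linarith [h2]
  -- Young inequalities
  have hY : ∀ (t : ℕ) (s : ℝ), 2*s*⟪e t, A (x (t+1)) - A xb⟫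
      ≤ s^2 * ‖A (x (t+1)) - A xb‖^2 + Ex t := by
    intro t s
    have h0 : (0:ℝ) ≤ ‖s • (A (x (t+1)) - A xb) - e t‖^2 := sq_nonneg _
    rw [norm_sub_sq_real] at h0
    have h3 : ‖s • (A (x (t+1)) - A xb)‖^2 = s^2 * ‖A (x (t+1)) - A xb‖^2 := by
      rw [norm_smul, mul_pow, Real.norm_eq_abs, sq_abs]
    have h4 : ⟪s • (A (x (t+1)) - A xb), e t⟫ = s * ⟪A (x (t+1)) - A xb, e t⟫ :=
      real_inner_smul_left _ _ _
    have h5 : ⟪A (x (t+1)) - A xb, e t⟫ = ⟪e t, A (x (t+1)) - A xb⟫ := real_inner_comm _ _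
    have h6 : Ex t = ‖e t‖^2 := rfl
    rw [h3, h4, h5] at h0
    linarith
  have hop : ∀ t : ℕ, ‖A (x (t+1)) - A xb‖^2 ≤ ‖A‖^2 * Dx t := by
    intro t
    have h1 : A (x (t+1)) - A xb = A (x (t+1) - xb) := (map_sub A _ _).symm
    rw [h1]
    calc ‖A (x (t+1) - xb)‖^2 ≤ (‖A‖ * ‖x (t+1) - xb‖)^2 := by
          apply pow_le_pow_left₀ (norm_nonneg _) (A.le_opNorm _)
    _ = ‖A‖^2 * Dx t := by rw [mul_pow]
  -- the proximal-term identity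
  have hTid : ∀ t : ℕ, 2*⟪T (y (t+1) - y t), y (t+1) - yb⟫
      = Qy (t+1) - Qy t + ⟪y (t+1) - y t, T (y (t+1) - y t)⟫ := by
    intro t
    have hpol := T_polar T hT_sa (y (t+1) - y t) (y (t+1) - yb)
    rw [show y (t+1) - yb - (y (t+1) - y t) = y t - yb by abel] at hpol
    have h2 : Qy t = ⟪y t - yb, T (y t - yb)⟫ := rfl
    have h3 : Qy (t+1) = ⟪y (t+1) - yb, T (y (t+1) - yb)⟫ := rfl
    rw [h2, h3]
    linarith [hpol]
  -- per-step objective bound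
  have hstep : ∀ t : ℕ, fx (t+1) + gy (t+1) ≤ fb + gb
      + max (γ-1) 0 * (β/2) * Ex t + β * ‖A‖^2 / 2 * Dx t
      + ((Nz t / (2*(γ*β)) + Qy t / 2) - (Nz (t+1) / (2*(γ*β)) + Qy (t+1) / 2)) := by
    intro t
    have hf1 : fx (t+1) + ⟪ContinuousLinearMap.adjoint A (z t), xb - x (t+1)⟫ ≤ fb :=
      subgrad_real (hsubf t) (hfm t) hfb
    have hg1 : gy (t+1) + ⟪v t, yb - y (t+1)⟫ ≤ gb :=
      subgrad_real (hsubg t) (hgm t) hgb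
    have hf2 : ⟪ContinuousLinearMap.adjoint A (z t), xb - x (t+1)⟫
        = -(⟪z t, A (x (t+1))⟫ - ⟪z t, A xb⟫) := by
      rw [ContinuousLinearMap.adjoint_inner_left, map_sub, inner_sub_right]; ring
    have hg2 : ⟪v t, yb - y (t+1)⟫
        = -((⟪z t, B (y (t+1))⟫ - ⟪z t, B yb⟫) - β * (⟪e t, B (y (t+1))⟫ - ⟪e t, B yb⟫)
            - ⟪T (y (t+1) - y t), y (t+1) - yb⟫) := by
      have hflip : yb - y (t+1) = -(y (t+1) - yb) := by abel
      rw [hflip, inner_neg_right, neg_inj]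
      show ⟪ContinuousLinearMap.adjoint B (z t) - β • ContinuousLinearMap.adjoint B (e t)
          - T (y (t+1) - y t), y (t+1) - yb⟫ = _
      simp only [inner_sub_left, real_inner_smul_left, ContinuousLinearMap.adjoint_inner_left,
        map_sub, inner_sub_right]
      ring
    have hs1 := hsplit t (z t)
    have hzdiv : ⟪z t, e t⟫ = Nz t/(2*(γ*β)) - Nz (t+1)/(2*(γ*β)) + (γ*β)/2 * Ex t := by
      have h := hzz t
      field_simp
      linarith
    have hEDβ : β * (⟪e t, B (y (t+1))⟫ - ⟪e t, B yb⟫)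
        = β * (Ex t - (⟪e t, A (x (t+1))⟫ - ⟪e t, A xb⟫)) := by rw [hED t]
    have hYβ : β * (2*1*⟪e t, A (x (t+1)) - A xb⟫)
        ≤ β * (1^2 * ‖A (x (t+1)) - A xb‖^2 + Ex t) :=
      mul_le_mul_of_nonneg_left (hY t 1) hβ.le
    have hopβ : β * ‖A (x (t+1)) - A xb‖^2 ≤ β * (‖A‖^2 * Dx t) :=
      mul_le_mul_of_nonneg_left (hop t) hβ.le
    have hea : ⟪e t, A (x (t+1)) - A xb⟫ = ⟪e t, A (x (t+1))⟫ - ⟪e t, A xb⟫ :=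
      inner_sub_right _ _ _
    have hTt := hTid t
    have hqd : 0 ≤ ⟪y (t+1) - y t, T (y (t+1) - y t)⟫ := hT_psd _
    have hmaxE : (γ-1) * ((β/2) * Ex t) ≤ max (γ-1) 0 * ((β/2) * Ex t) :=
      mul_le_mul_of_nonneg_right (le_max_left _ _) (by positivity)
    rw [hea] at hYβ
    rw [hf2] at hf1
    rw [hg2] at hg1
    linarith only [hf1, hg1, hs1, hzdiv, hEDβ, hYβ, hopβ, hTt, hqd, hmaxE]
  -- per-step descent of the Lyapunov function
  have hdesc : ∀ t : ℕ, γ*β*(δ*Dx t + σ*β*Ex t)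
      ≤ (Dz t + γ*β*Qy t) - (Dz (t+1) + γ*β*Qy (t+1)) := by
    intro t
    have hD1 : ⟪x (t+1) - xb, Sf (x (t+1) - xb)⟫
        ≤ ⟪z t - zb, A (x (t+1))⟫ - ⟪z t - zb, A xb⟫ := by
      have h := hf_mono (x (t+1)) xb (ContinuousLinearMap.adjoint A (z t))
        (ContinuousLinearMap.adjoint A zb) (hsubf t) hA1f
      have h2 : ⟪ContinuousLinearMap.adjoint A (z t) - ContinuousLinearMap.adjoint A zb,
          x (t+1) - xb⟫ = ⟪z t - zb, A (x (t+1))⟫ - ⟪z t - zb, A xb⟫ := by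
        rw [← map_sub, ContinuousLinearMap.adjoint_inner_left, map_sub A, inner_sub_right]
      rw [h2] at h
      exact h
    have hD2 : ⟪y (t+1) - yb, Sg (y (t+1) - yb)⟫
        ≤ (⟪z t - zb, B (y (t+1))⟫ - ⟪z t - zb, B yb⟫)
          - β * (⟪e t, B (y (t+1))⟫ - ⟪e t, B yb⟫)
          - ⟪T (y (t+1) - y t), y (t+1) - yb⟫ := by
      have h := hg_mono (y (t+1)) yb (v t) (ContinuousLinearMap.adjoint B zb) (hsubg t) hA1g
      have hvv : v t - ContinuousLinearMap.adjoint B zb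
          = ContinuousLinearMap.adjoint B (z t - zb) - β • ContinuousLinearMap.adjoint B (e t)
            - T (y (t+1) - y t) := by
        show ContinuousLinearMap.adjoint B (z t) - β • ContinuousLinearMap.adjoint B (e t)
            - T (y (t+1) - y t) - ContinuousLinearMap.adjoint B zb = _
        rw [map_sub (ContinuousLinearMap.adjoint B) (z t) zb]; module
      have h2 : ⟪v t - ContinuousLinearMap.adjoint B zb, y (t+1) - yb⟫
          = (⟪z t - zb, B (y (t+1))⟫ - ⟪z t - zb, B yb⟫)
            - β * (⟪e t, B (y (t+1))⟫ - ⟪e t, B yb⟫)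
            - ⟪T (y (t+1) - y t), y (t+1) - yb⟫ := by
        rw [hvv]
        simp only [inner_sub_left, real_inner_smul_left, ContinuousLinearMap.adjoint_inner_left,
          map_sub, inner_sub_right]
        ring
      rw [h2] at h
      exact h
    have hD3 : 0 ≤ ⟪y (t+1) - yb, Sg (y (t+1) - yb)⟫ := hSg_psd _
    have hD4 : δ*Dx t + (β+μ)*‖A (x (t+1)) - A xb‖^2
        ≤ 2*⟪x (t+1) - xb, Sf (x (t+1) - xb)⟫ := by
      have h := hcond2 (x (t+1) - xb)
      rw [map_sub A (x (t+1)) xb] at h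
      have h6 : Dx t = ‖x (t+1) - xb‖^2 := rfl
      rw [h6]
      linarith
    have hs1 := hsplit t (z t - zb)
    have hEDβ : β * (⟪e t, B (y (t+1))⟫ - ⟪e t, B yb⟫)
        = β * (Ex t - (⟪e t, A (x (t+1))⟫ - ⟪e t, A xb⟫)) := by rw [hED t]
    have hTt := hTid t
    have hqd : 0 ≤ ⟪y (t+1) - y t, T (y (t+1) - y t)⟫ := hT_psd _
    have hC : δ*Dx t + (β+μ)*‖A (x (t+1)) - A xb‖^2 + 2*(β*Ex t)
        - 2*(β*(⟪e t, A (x (t+1))⟫ - ⟪e t, A xb⟫)) + (Qy (t+1) - Qy t)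
        + ⟪y (t+1) - y t, T (y (t+1) - y t)⟫ ≤ 2*⟪z t - zb, e t⟫ := by
      linarith only [hD1, hD2, hD3, hD4, hs1, hEDβ, hTt]
    have hCt := mul_le_mul_of_nonneg_left hC ht0pos.le
    have hYβ := mul_le_mul_of_nonneg_left (hY t t₀) hβ.le
    have hea : ⟪e t, A (x (t+1)) - A xb⟫ = ⟪e t, A (x (t+1))⟫ - ⟪e t, A xb⟫ :=
      inner_sub_right _ _ _
    rw [hea] at hYβ
    have hnA : (0:ℝ) ≤ ‖A (x (t+1)) - A xb‖^2 := sq_nonneg _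
    have hdropc : 0 ≤ (t₀*((β+μ) - t₀*β)) * ‖A (x (t+1)) - A xb‖^2 :=
      mul_nonneg (mul_nonneg ht0pos.le (by linarith)) hnA
    have hqt : 0 ≤ t₀ * ⟪y (t+1) - y t, T (y (t+1) - y t)⟫ := mul_nonneg ht0pos.le hqd
    have hKeyT : t₀*(δ*Dx t) + (2*t₀-1)*(β*Ex t) + t₀*(Qy (t+1) - Qy t)
        ≤ 2*t₀*⟪z t - zb, e t⟫ := by linarith only [hCt, hYβ, hdropc, hqt]
    have hK := mul_le_mul_of_nonneg_left hKeyT (le_of_lt hγβ)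
    have hD8t : t₀*(2*(γ*β)*⟪z t - zb, e t⟫) = t₀*(Dz t - Dz (t+1) + (γ*β)^2*Ex t) := by
      rw [hzzb t]
    have hscalE : 0 ≤ (t₀*(2-γ-σ) - 1) * (γ*β^2*Ex t) :=
      mul_nonneg (by linarith) (mul_nonneg (by positivity) (hExpos t))
    have hgoal : t₀ * (γ*β*(δ*Dx t + σ*β*Ex t))
        ≤ t₀ * ((Dz t + γ*β*Qy t) - (Dz (t+1) + γ*β*Qy (t+1))) := by
      linarith only [hK, hD8t, hscalE]
    exact le_of_mul_le_mul_left hgoal ht0pos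
  -- telescoping the descent inequality
  have hDescSum : γ*β*(δ*(∑ t ∈ Finset.range N, Dx t) + σ*β*(∑ t ∈ Finset.range N, Ex t))
      ≤ Dz 0 + γ*β*Qy 0 := by
    have h1 : ∑ t ∈ Finset.range N, (γ*β*(δ*Dx t + σ*β*Ex t))
        ≤ ∑ t ∈ Finset.range N, ((Dz t + γ*β*Qy t) - (Dz (t+1) + γ*β*Qy (t+1))) :=
      Finset.sum_le_sum (fun t _ => hdesc t)
    rw [Finset.sum_range_sub' (fun t => Dz t + γ*β*Qy t) N] at h1
    have h2 : ∑ t ∈ Finset.range N, (γ*β*(δ*Dx t + σ*β*Ex t))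
        = γ*β*δ*(∑ t ∈ Finset.range N, Dx t) + γ*β*σ*β*(∑ t ∈ Finset.range N, Ex t) := by
      calc ∑ t ∈ Finset.range N, (γ*β*(δ*Dx t + σ*β*Ex t))
          = ∑ t ∈ Finset.range N, (γ*β*δ*Dx t + γ*β*σ*β*Ex t) :=
            Finset.sum_congr rfl (fun t _ => by ring)
      _ = _ := by rw [Finset.sum_add_distrib, ← Finset.mul_sum, ← Finset.mul_sum]
    rw [h2] at h1
    have h3 : 0 ≤ Dz N + γ*β*Qy N := add_nonneg (hDzpos N) (mul_nonneg hγβ.le (hQpos N))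
    linarith only [h1, h3]
  have hSnn1 : 0 ≤ ∑ t ∈ Finset.range N, Dx t := Finset.sum_nonneg (fun t _ => hDxpos t)
  have hSnn2 : 0 ≤ ∑ t ∈ Finset.range N, Ex t := Finset.sum_nonneg (fun t _ => hExpos t)
  have hK2 : δ*(∑ t ∈ Finset.range N, Dx t) + σ*β*(∑ t ∈ Finset.range N, Ex t)
      ≤ 1/(γ*β)*Dz 0 + Qy 0 := by
    rw [show 1/(γ*β)*Dz 0 + Qy 0 = (Dz 0 + γ*β*Qy 0)/(γ*β) by field_simp]
    rw [le_div_iff₀ hγβ]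
    linarith only [hDescSum]
  have hSDx : δ*(∑ t ∈ Finset.range N, Dx t) ≤ 1/(γ*β)*Dz 0 + Qy 0 := by
    linarith only [hK2, mul_nonneg (mul_nonneg hσ.le hβ.le) hSnn2]
  have hSEx : σ*β*(∑ t ∈ Finset.range N, Ex t) ≤ 1/(γ*β)*Dz 0 + Qy 0 := by
    linarith only [hK2, mul_nonneg hδ.le hSnn1]
  -- summing the per-step objective bound
  have hObj : ∑ t ∈ Finset.range N, (fx (t+1) + gy (t+1))
      ≤ N*(fb+gb) + (Nz 0/(2*(γ*β)) + Qy 0/2)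
        + max (γ-1) 0 * (β/2) * (∑ t ∈ Finset.range N, Ex t)
        + β*‖A‖^2/2 * (∑ t ∈ Finset.range N, Dx t) := by
    have h1 : ∑ t ∈ Finset.range N, (fx (t+1) + gy (t+1)) ≤ ∑ t ∈ Finset.range N,
        (fb + gb + max (γ-1) 0 * (β/2) * Ex t + β * ‖A‖^2 / 2 * Dx t
          + ((Nz t / (2*(γ*β)) + Qy t / 2) - (Nz (t+1) / (2*(γ*β)) + Qy (t+1) / 2))) :=
      Finset.sum_le_sum (fun t _ => hstep t)
    have h2 : ∑ t ∈ Finset.range N,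
        (fb + gb + max (γ-1) 0 * (β/2) * Ex t + β * ‖A‖^2 / 2 * Dx t
          + ((Nz t / (2*(γ*β)) + Qy t / 2) - (Nz (t+1) / (2*(γ*β)) + Qy (t+1) / 2)))
        = N*(fb+gb) + max (γ-1) 0 * (β/2) * (∑ t ∈ Finset.range N, Ex t)
          + β*‖A‖^2/2 * (∑ t ∈ Finset.range N, Dx t)
          + ((Nz 0/(2*(γ*β)) + Qy 0/2) - (Nz N/(2*(γ*β)) + Qy N/2)) := by
      rw [Finset.sum_add_distrib, Finset.sum_add_distrib, Finset.sum_add_distrib,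
        Finset.sum_range_sub' (fun t => Nz t / (2*(γ*β)) + Qy t / 2) N,
        Finset.sum_const, Finset.card_range, ← Finset.mul_sum, ← Finset.mul_sum,
        nsmul_eq_mul]
    rw [h2] at h1
    have h3 : 0 ≤ Nz N/(2*(γ*β)) + Qy N/2 :=
      add_nonneg (div_nonneg (hNzpos N) (by positivity)) (by linarith only [hQpos N])
    linarith only [h1, h3]
  -- reindexing to the window `Icc 1 N`
  have hIccf : ∑ t ∈ Finset.Icc 1 N, fx t = ∑ t ∈ Finset.range N, fx (t+1) := by
    rw [← Finset.Ico_add_one_right_eq_Icc, Finset.sum_Ico_eq_sum_range]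
    exact Finset.sum_congr (by norm_num) (fun t _ => by rw [Nat.add_comm])
  have hIccg : ∑ t ∈ Finset.Icc 1 N, gy t = ∑ t ∈ Finset.range N, gy (t+1) := by
    rw [← Finset.Ico_add_one_right_eq_Icc, Finset.sum_Ico_eq_sum_range]
    exact Finset.sum_congr (by norm_num) (fun t _ => by rw [Nat.add_comm])
  -- Jensen's inequality for the ergodic averages
  have hbdf : ∀ t ∈ Finset.Icc 1 N, f (x t) ≤ ((fx t : ℝ) : EReal) := by
    intro t ht
    obtain ⟨h1t, _⟩ := Finset.mem_Icc.mp ht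
    obtain ⟨s, rfl⟩ := Nat.exists_eq_add_of_le h1t
    rw [Nat.add_comm 1 s]
    exact le_of_eq (hfm s)
  have hbdg : ∀ t ∈ Finset.Icc 1 N, g (y t) ≤ ((gy t : ℝ) : EReal) := by
    intro t ht
    obtain ⟨h1t, _⟩ := Finset.mem_Icc.mp ht
    obtain ⟨s, rfl⟩ := Nat.exists_eq_add_of_le h1t
    rw [Nat.add_comm 1 s]
    exact le_of_eq (hgm s)
  have hJf := jensen_avg f hf_ne_bot hf_cvx x fx N hN hbdf
  have hJg := jensen_avg g hg_ne_bot hg_cvx y gy N hN hbdg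
  have hNpos : (0:ℝ) < N := by exact_mod_cast hN
  -- the final real inequality
  have hfinal : (N:ℝ)⁻¹ * (∑ t ∈ Finset.Icc 1 N, fx t)
      + (N:ℝ)⁻¹ * (∑ t ∈ Finset.Icc 1 N, gy t)
      ≤ fb + gb + (1/(2*N) * (1/(γ*β)*Nz 0 + Qy 0)
        + 1/N * (β*‖A‖^2/(2*δ) + max (γ-1) 0/(2*σ)) * (1/(γ*β)*Dz 0 + Qy 0)) := by
    have hsum2 : ∑ t ∈ Finset.range N, (fx (t+1) + gy (t+1))
        = (∑ t ∈ Finset.Icc 1 N, fx t) + (∑ t ∈ Finset.Icc 1 N, gy t) := by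
      rw [hIccf, hIccg, ← Finset.sum_add_distrib]
    have hmax2 : max (γ-1) 0 * (β/2) * (∑ t ∈ Finset.range N, Ex t)
        ≤ max (γ-1) 0/(2*σ) * (1/(γ*β)*Dz 0 + Qy 0) := by
      have h := mul_le_mul_of_nonneg_left hSEx
        (show (0:ℝ) ≤ max (γ-1) 0/(2*σ) by positivity)
      calc max (γ-1) 0 * (β/2) * (∑ t ∈ Finset.range N, Ex t)
          = max (γ-1) 0/(2*σ) * (σ*β*(∑ t ∈ Finset.range N, Ex t)) := by field_simp
      _ ≤ _ := h
    have hop2 : β*‖A‖^2/2 * (∑ t ∈ Finset.range N, Dx t)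
        ≤ β*‖A‖^2/(2*δ) * (1/(γ*β)*Dz 0 + Qy 0) := by
      have h := mul_le_mul_of_nonneg_left hSDx
        (show (0:ℝ) ≤ β*‖A‖^2/(2*δ) by positivity)
      calc β*‖A‖^2/2 * (∑ t ∈ Finset.range N, Dx t)
          = β*‖A‖^2/(2*δ) * (δ*(∑ t ∈ Finset.range N, Dx t)) := by field_simp
      _ ≤ _ := h
    have htot : (∑ t ∈ Finset.Icc 1 N, fx t) + (∑ t ∈ Finset.Icc 1 N, gy t)
        ≤ N*(fb+gb) + (Nz 0/(2*(γ*β)) + Qy 0/2)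
          + (β*‖A‖^2/(2*δ) + max (γ-1) 0/(2*σ)) * (1/(γ*β)*Dz 0 + Qy 0) := by
      rw [← hsum2]
      linarith only [hObj, hmax2, hop2]
    calc (N:ℝ)⁻¹ * (∑ t ∈ Finset.Icc 1 N, fx t) + (N:ℝ)⁻¹ * (∑ t ∈ Finset.Icc 1 N, gy t)
        = (N:ℝ)⁻¹ * ((∑ t ∈ Finset.Icc 1 N, fx t) + (∑ t ∈ Finset.Icc 1 N, gy t)) := by ring
    _ ≤ (N:ℝ)⁻¹ * (N*(fb+gb) + (Nz 0/(2*(γ*β)) + Qy 0/2)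
          + (β*‖A‖^2/(2*δ) + max (γ-1) 0/(2*σ)) * (1/(γ*β)*Dz 0 + Qy 0)) :=
        mul_le_mul_of_nonneg_left htot (by positivity)
    _ = fb + gb + (1/(2*N) * (1/(γ*β)*Nz 0 + Qy 0)
          + 1/N * (β*‖A‖^2/(2*δ) + max (γ-1) 0/(2*σ)) * (1/(γ*β)*Dz 0 + Qy 0)) := by
        field_simp
        ring
  -- conclusion in `EReal`
  calc f ((N:ℝ)⁻¹ • ∑ t ∈ Finset.Icc 1 N, x t) + g ((N:ℝ)⁻¹ • ∑ t ∈ Finset.Icc 1 N, y t)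
      ≤ (((N:ℝ)⁻¹ * ∑ t ∈ Finset.Icc 1 N, fx t : ℝ) : EReal)
        + (((N:ℝ)⁻¹ * ∑ t ∈ Finset.Icc 1 N, gy t : ℝ) : EReal) := add_le_add hJf hJg
  _ = (((N:ℝ)⁻¹ * (∑ t ∈ Finset.Icc 1 N, fx t)
        + (N:ℝ)⁻¹ * (∑ t ∈ Finset.Icc 1 N, gy t) : ℝ) : EReal) := (EReal.coe_add _ _).symm
  _ ≤ ((fb + gb + (1 / (2 * N) * (1 / (γ * β) * ‖z 0‖ ^ 2 + ⟪y 0 - yb, T (y 0 - yb)⟫)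
            + 1 / N * (β * ‖A‖ ^ 2 / (2 * δ) + max (γ - 1) 0 / (2 * σ))
              * (1 / (γ * β) * ‖z 0 - zb‖ ^ 2 + ⟪y 0 - yb, T (y 0 - yb)⟫) : ℝ)) : EReal) :=
      EReal.coe_le_coe_iff.mpr hfinal
  _ = f xb + g yb + ((1 / (2 * N) * (1 / (γ * β) * ‖z 0‖ ^ 2 + ⟪y 0 - yb, T (y 0 - yb)⟫)
            + 1 / N * (β * ‖A‖ ^ 2 / (2 * δ) + max (γ - 1) 0 / (2 * σ))
              * (1 / (γ * β) * ‖z 0 - zb‖ ^ 2 + ⟪y 0 - yb, T (y 0 - yb)⟫) : ℝ) : EReal) := by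
      rw [hfb, hgb]
end
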